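/- arXiv:2410.15538 — 9 statements merged into one kernel-verified Lean document; each statement's English description precedes it below -/
import Mathlib

section
/- Let F be a field of characteristic ≠ 2 and let T = [t_{ij}] be a strictly lower triangular n×n matrix over F. In the commutative F-algebra A(T) generated by X_1,…,X_n subject to X_1² = 0 and X_i² = Σ_{j<i} t_{ij} X_j X_i for 2 ≤ i ≤ n, every generator X_i is nilpotent; in fact X_i^{n+1} = 0 for each i. -/
open scoped BigOperators

noncomputable section

variable {F : Type} [Field F]

/-- `T` is strictly lower triangular. -/
def SLT {n : ℕ} (T : Matrix (Fin n) (Fin n) F) : Prop :=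
  ∀ i j : Fin n, i ≤ j → T i j = 0

/-- The ideal of relations defining the nil graded algebra `A(T)`:
`X i ^ 2 = ∑ j < i, T i j * X j * X i` (for `i = 0` the sum is empty, giving `X 0 ^ 2 = 0`). -/
def ntIdeal {n : ℕ} (T : Matrix (Fin n) (Fin n) F) : Ideal (MvPolynomial (Fin n) F) :=
  Ideal.span {p | ∃ i : Fin n,
    p = MvPolynomial.X i ^ 2 -
      ∑ j ∈ Finset.univ.filter (fun j => j < i),
        MvPolynomial.C (T i j) * MvPolynomial.X j * MvPolynomial.X i}

/-- The nil graded algebra `A(T)` associated to the strictly lower triangular matrix `T`. -/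
abbrev NTAlg {n : ℕ} (T : Matrix (Fin n) (Fin n) F) : Type :=
  MvPolynomial (Fin n) F ⧸ ntIdeal T

/-- The generator `X i` of `A(T)`. -/
def ntGen {n : ℕ} (T : Matrix (Fin n) (Fin n) F) (i : Fin n) : NTAlg T :=
  Ideal.Quotient.mk (ntIdeal T) (MvPolynomial.X i)

/-- There is a degree-preserving isomorphism `A(T) → A(S)`, i.e. an algebra isomorphism
sending each generator to an `F`-linear combination of the generators of the target. -/
def NTIso {n : ℕ} (T S : Matrix (Fin n) (Fin n) F) : Prop :=
  ∃ e : NTAlg T ≃ₐ[F] NTAlg S, ∃ Γ : Matrix (Fin n) (Fin n) F,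
    ∀ j : Fin n, e (ntGen T j) = ∑ i : Fin n, Γ i j • ntGen S i

lemma ntGen_sq {n : ℕ} (T : Matrix (Fin n) (Fin n) F) (i : Fin n) :
    ntGen T i * ntGen T i = ∑ j ∈ Finset.univ.filter (fun j => j < i),
      Ideal.Quotient.mk (ntIdeal T) (MvPolynomial.C (T i j)) * ntGen T j * ntGen T i := by
  have hmem : (MvPolynomial.X i ^ 2 -
      ∑ j ∈ Finset.univ.filter (fun j => j < i),
        MvPolynomial.C (T i j) * MvPolynomial.X j * MvPolynomial.X i) ∈ ntIdeal T :=
    Ideal.subset_span ⟨i, rfl⟩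
  have h0 := Ideal.Quotient.eq_zero_iff_mem.mpr hmem
  rw [map_sub, sub_eq_zero, map_pow, map_sum] at h0
  show Ideal.Quotient.mk (ntIdeal T) (MvPolynomial.X i) *
      Ideal.Quotient.mk (ntIdeal T) (MvPolynomial.X i) = _
  rw [← sq, h0]
  exact Finset.sum_congr rfl (fun j _ => by rw [map_mul, map_mul]; rfl)

lemma ntProd_zero {n : ℕ} (T : Matrix (Fin n) (Fin n) F) :
    ∀ i : ℕ, ∀ s : Multiset (Fin n), (∀ j ∈ s, (j : ℕ) < i) → i + 1 ≤ Multiset.card s →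
      (s.map (ntGen T)).prod = 0 := by
  intro i
  induction i using Nat.strong_induction_on with
  | _ i IH =>
    match i with
    | 0 =>
      intro s hs hc
      have hne : s ≠ 0 := by
        intro h; subst h; simp at hc
      obtain ⟨j, hj⟩ := Multiset.exists_mem_of_ne_zero hne
      exact absurd (hs j hj) (Nat.not_lt_zero _)
    | m + 1 =>
      by_cases hm : m < n
      · set M : Fin n := ⟨m, hm⟩ with hM
        have hMval : (M : ℕ) = m := rfl
        suffices h : ∀ N : ℕ, ∀ s : Multiset (Fin n), (∀ j ∈ s, (j : ℕ) < m + 1) →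
            m + 2 ≤ Multiset.card s → s.count M ≤ N → (s.map (ntGen T)).prod = 0 by
          intro s hs hc
          exact h (Multiset.card s) s hs hc (Multiset.count_le_card _ _)
        intro N
        induction N with
        | zero =>
          intro s hs hc hcount
          refine IH m (Nat.lt_succ_self m) s (fun j hj => ?_) (by omega)
          have hjm : (j : ℕ) < m + 1 := hs j hj
          by_contra hge
          have hjM : j = M := Fin.ext (by omega)
          subst hjM
          have := Multiset.count_pos.mpr hj
          omega
        | succ N IHN =>
          intro s hs hc hcount
          by_cases hle : s.count M ≤ N
          · exact IHN s hs hc hle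
          · by_cases h2 : 2 ≤ s.count M
            · -- rewrite using the relation
              have hMs : M ∈ s := Multiset.count_pos.mp (by omega)
              obtain ⟨u, hu⟩ := Multiset.exists_cons_of_mem hMs
              have hMu : M ∈ u := by
                rw [hu, Multiset.count_cons_self] at h2
                exact Multiset.count_pos.mp (by omega)
              obtain ⟨t, ht⟩ := Multiset.exists_cons_of_mem hMu
              subst ht; subst hu
              rw [Multiset.map_cons, Multiset.map_cons, Multiset.prod_cons,
                Multiset.prod_cons, ← mul_assoc, ntGen_sq, Finset.sum_mul]
              refine Finset.sum_eq_zero (fun j hj => ?_)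
              have hjM : j < M := (Finset.mem_filter.mp hj).2
              have hjm : (j : ℕ) < m := hjM
              have hjne : j ≠ M := ne_of_lt hjM
              have hprod : ((j ::ₘ M ::ₘ t).map (ntGen T)).prod = 0 := by
                refine IHN (j ::ₘ M ::ₘ t) ?_ ?_ ?_
                · intro k hk
                  simp only [Multiset.mem_cons] at hk
                  rcases hk with rfl | rfl | hk
                  · omega
                  · omega
                  · exact hs k (Multiset.mem_cons_of_mem (Multiset.mem_cons_of_mem hk))
                · simp only [Multiset.card_cons] at hc ⊢
                  omega
                · simp only [Multiset.count_cons_self,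
                    Multiset.count_cons_of_ne (Ne.symm hjne)] at hcount ⊢
                  omega
              rw [Multiset.map_cons, Multiset.map_cons, Multiset.prod_cons,
                Multiset.prod_cons] at hprod
              calc Ideal.Quotient.mk (ntIdeal T) (MvPolynomial.C (T M j)) * ntGen T j *
                    ntGen T M * (t.map (ntGen T)).prod
                  = Ideal.Quotient.mk (ntIdeal T) (MvPolynomial.C (T M j)) *
                    (ntGen T j * (ntGen T M * (t.map (ntGen T)).prod)) := by ring
                _ = 0 := by rw [hprod, mul_zero]
            · -- count s M = 1
              have hMs : M ∈ s := Multiset.count_pos.mp (by omega)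
              obtain ⟨t, ht⟩ := Multiset.exists_cons_of_mem hMs
              subst ht
              have htcount : t.count M = 0 := by
                rw [Multiset.count_cons_self] at hcount h2 hle
                omega
              have hprod : (t.map (ntGen T)).prod = 0 := by
                refine IH m (Nat.lt_succ_self m) t (fun j hj => ?_) ?_
                · have hjm : (j : ℕ) < m + 1 := hs j (Multiset.mem_cons_of_mem hj)
                  by_contra hge
                  have hjM : j = M := Fin.ext (by omega)
                  subst hjM
                  have := Multiset.count_pos.mpr hj
                  omega
                · simp only [Multiset.card_cons] at hc; omega
              rw [Multiset.map_cons, Multiset.prod_cons, hprod, mul_zero]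
      · -- m ≥ n : every element has val < n ≤ m
        intro s hs hc
        refine IH m (Nat.lt_succ_self m) s (fun j hj => ?_) (by omega)
        have := j.isLt
        omega


/-- Every generator of `A(T)` is nilpotent; in fact `X i ^ (n + 1) = 0`. -/
theorem stmt0 {n : ℕ} (h2 : (2 : F) ≠ 0) (T : Matrix (Fin n) (Fin n) F) (hT : SLT T)
    (i : Fin n) :
    IsNilpotent (ntGen T i) ∧ ntGen T i ^ (n + 1) = 0 := by
  have key : ntGen T i ^ (n + 1) = 0 := by
    have h := ntProd_zero T n (Multiset.replicate (n + 1) i)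
      (fun j hj => by
        rw [Multiset.eq_of_mem_replicate hj]; exact i.isLt)
      (by simp)
    rwa [Multiset.map_replicate, Multiset.prod_replicate] at h
  exact ⟨⟨n + 1, key⟩, key⟩
end
end

section
/- Let F be a field of characteristic ≠ 2 and T a strictly lower triangular n×n matrix over F. Then the algebra A(T) has F-dimension 2^n, and the set of monomials {X_1^{a_1} ⋯ X_n^{a_n} : a_i ∈ {0,1}} is an F-basis of A(T). -/
open scoped BigOperators

noncomputable section

variable {F : Type} [Field F]

-- auxiliary development
namespace NTAux

open MvPolynomial Finset Fin

variable {n : ℕ}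

/-- The defining relation polynomial. -/
def ntRel (T : Matrix (Fin n) (Fin n) F) (i : Fin n) : MvPolynomial (Fin n) F :=
  MvPolynomial.X i ^ 2 -
    ∑ j ∈ Finset.univ.filter (fun j => j < i),
      MvPolynomial.C (T i j) * MvPolynomial.X j * MvPolynomial.X i

lemma ntIdeal_eq (T : Matrix (Fin n) (Fin n) F) :
    ntIdeal T = Ideal.span (Set.range (ntRel T)) := by
  unfold ntIdeal ntRel
  congr 1
  ext p
  simp [eq_comm, Set.range]

lemma ntRel_mem (T : Matrix (Fin n) (Fin n) F) (i : Fin n) : ntRel T i ∈ ntIdeal T := by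
  rw [ntIdeal_eq]
  exact Ideal.subset_span ⟨i, rfl⟩

lemma filter_lt_castSucc (i : Fin n) :
    (Finset.univ.filter (fun j : Fin (n+1) => j < Fin.castSucc i)) =
    (Finset.univ.filter (fun j : Fin n => j < i)).map Fin.castSuccEmb := by
  ext j
  simp only [Finset.mem_filter, Finset.mem_map, Finset.mem_univ, true_and, Fin.coe_castSuccEmb]
  constructor
  · intro hj
    obtain ⟨j', rfl⟩ := Fin.exists_castSucc_eq.mpr
      (Fin.ne_last_of_lt (hj.trans_le (Fin.le_last _)))
    exact ⟨j', by simpa [Fin.castSucc_lt_castSucc_iff] using hj, rfl⟩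
  · rintro ⟨j', hj', rfl⟩
    simpa [Fin.castSucc_lt_castSucc_iff] using hj'

lemma filter_lt_last :
    (Finset.univ.filter (fun j : Fin (n+1) => j < Fin.last n)) =
    (Finset.univ : Finset (Fin n)).map Fin.castSuccEmb := by
  ext j
  simp only [Finset.mem_filter, Finset.mem_map, Finset.mem_univ, true_and, Fin.coe_castSuccEmb]
  constructor
  · intro hj
    obtain ⟨j', rfl⟩ := Fin.exists_castSucc_eq.mpr hj.ne
    exact ⟨j', rfl⟩
  · rintro ⟨j', rfl⟩
    exact Fin.castSucc_lt_last j'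

/-- renaming by castSucc sends relations of the submatrix to relations. -/
lemma rename_ntRel (T : Matrix (Fin (n+1)) (Fin (n+1)) F) (i : Fin n) :
    rename Fin.castSucc (ntRel (T.submatrix Fin.castSucc Fin.castSucc) i)
      = ntRel T (Fin.castSucc i) := by
  unfold ntRel
  rw [filter_lt_castSucc, Finset.sum_map]
  simp only [map_sub, map_pow, rename_X, map_sum, map_mul, rename_C, Matrix.submatrix_apply,
    Fin.coe_castSuccEmb]

lemma ntRel_last (T : Matrix (Fin (n+1)) (Fin (n+1)) F) :
    ntRel T (Fin.last n)
      = MvPolynomial.X (Fin.last n) ^ 2 -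
        (rename Fin.castSucc (∑ j : Fin n, MvPolynomial.C (T (Fin.last n) (Fin.castSucc j)) *
          MvPolynomial.X j)) * MvPolynomial.X (Fin.last n) := by
  unfold ntRel
  rw [filter_lt_last, Finset.sum_map, map_sum, Finset.sum_mul]
  simp only [map_mul, rename_C, rename_X, Fin.coe_castSuccEmb, mul_assoc]

def finsetSuccEquiv (n : ℕ) : Finset (Fin n) × Fin 2 ≃ Finset (Fin (n + 1)) where
  toFun p := p.1.map Fin.castSuccEmb ∪ (if p.2 = 1 then {Fin.last n} else ∅)
  invFun t := (t.preimage Fin.castSucc (Fin.castSucc_injective n).injOn,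
    if Fin.last n ∈ t then 1 else 0)
  left_inv := by
    rintro ⟨s, k⟩
    have hlast : ∀ j : Fin n, Fin.castSucc j ≠ Fin.last n := fun j => (Fin.castSucc_lt_last j).ne
    ext1
    · ext j
      simp only [Finset.mem_preimage, Finset.mem_union, Finset.mem_map, Fin.coe_castSuccEmb]
      constructor
      · rintro (⟨j', hj'm, hj'⟩ | hj)
        · rwa [← (Fin.castSucc_injective n) hj']
        · exfalso
          split at hj <;> simp only [Finset.mem_singleton, Finset.notMem_empty] at hj
          exact hlast j hj
      · intro hj
        exact Or.inl ⟨j, hj, rfl⟩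
    · have h2 : Fin.last n ∉ s.map Fin.castSuccEmb := by
        simp only [Finset.mem_map, Fin.coe_castSuccEmb]
        rintro ⟨j, -, hj⟩
        exact hlast j hj
      by_cases hk : k = 1
      · simp [hk, h2]
      · have hk0 : k = 0 := by omega
        simp [hk0, h2]
  right_inv := by
    intro t
    have hlast : ∀ j : Fin n, Fin.castSucc j ≠ Fin.last n := fun j => (Fin.castSucc_lt_last j).ne
    ext j
    by_cases ht : Fin.last n ∈ t <;>
      simp only [ht, if_true, if_false, reduceIte, Finset.mem_union, Finset.mem_map,
        Finset.mem_preimage, Fin.coe_castSuccEmb, Finset.mem_singleton, Finset.notMem_empty,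
        (show ¬((0:Fin 2) = 1) by decide), or_false]
    · constructor
      · rintro (⟨j', hj', rfl⟩ | rfl) <;> assumption
      · intro hj
        induction j using Fin.lastCases with
        | last => exact Or.inr rfl
        | cast j => exact Or.inl ⟨j, hj, rfl⟩
    · constructor
      · rintro ⟨j', hj', rfl⟩; assumption
      · intro hj
        induction j using Fin.lastCases with
        | last => exact absurd hj ht
        | cast j => exact ⟨j, hj, rfl⟩

end NTAux

namespace NTAux

open MvPolynomial Polynomial

variable {n : ℕ} (T : Matrix (Fin (n+1)) (Fin (n+1)) F)

/-- The submatrix. -/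
abbrev Tsub : Matrix (Fin n) (Fin n) F := T.submatrix Fin.castSucc Fin.castSucc

/-- The coefficient polynomial for the last relation. -/
def sPoly : MvPolynomial (Fin n) F :=
  ∑ j : Fin n, MvPolynomial.C (T (Fin.last n) (Fin.castSucc j)) * MvPolynomial.X j

/-- Its class in the smaller algebra. -/
def sBar : NTAlg (Tsub T) := Ideal.Quotient.mk _ (sPoly T)

/-- The monic quadratic. -/
def fBar : Polynomial (NTAlg (Tsub T)) :=
  Polynomial.X ^ 2 - Polynomial.C (sBar T) * Polynomial.X

lemma degree_CsX_lt :
    (Polynomial.C (sBar T) * Polynomial.X).degree < ((2 : ℕ) : WithBot ℕ) :=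
  lt_of_le_of_lt ((Polynomial.degree_mul_le _ _).trans
    (add_le_add Polynomial.degree_C_le Polynomial.degree_X_le))
    (by norm_num)

lemma fBar_monic : (fBar T).Monic :=
  Polynomial.monic_X_pow_sub (degree_CsX_lt T)

lemma fBar_natDegree (hnt : Nontrivial (NTAlg (Tsub T))) : (fBar T).natDegree = 2 := by
  have h : (Polynomial.C (sBar T) * Polynomial.X).degree < (Polynomial.X ^ 2 :
      Polynomial (NTAlg (Tsub T))).degree := by
    rw [Polynomial.degree_X_pow]
    exact degree_CsX_lt T
  have h2 := Polynomial.degree_sub_eq_left_of_degree_lt h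
  rw [Polynomial.degree_X_pow] at h2
  exact Polynomial.natDegree_eq_of_degree_eq_some (h2 : (fBar T).degree = 2)

/-- The generator images for the forward map. -/
def vmap : Fin (n+1) → AdjoinRoot (fBar T) :=
  Fin.lastCases (AdjoinRoot.root (fBar T)) (fun j => AdjoinRoot.of (fBar T) (ntGen (Tsub T) j))

lemma vmap_castSucc (j : Fin n) :
    vmap T (Fin.castSucc j) = AdjoinRoot.of (fBar T) (ntGen (Tsub T) j) := by
  simp [vmap]

lemma vmap_last : vmap T (Fin.last n) = AdjoinRoot.root (fBar T) := by
  simp [vmap]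

lemma aeval_of_comp :
    ((MvPolynomial.aeval (R := F)
        (fun j => AdjoinRoot.of (fBar T) (ntGen (Tsub T) j))).toRingHom :
      MvPolynomial (Fin n) F →+* AdjoinRoot (fBar T))
      = (AdjoinRoot.of (fBar T)).comp (Ideal.Quotient.mk (ntIdeal (Tsub T))) := by
  refine MvPolynomial.ringHom_ext ?_ ?_
  · intro a
    show MvPolynomial.aeval _ (MvPolynomial.C a)
      = AdjoinRoot.of (fBar T) (Ideal.Quotient.mk _ (MvPolynomial.C a))
    rw [MvPolynomial.aeval_C]
    rw [← MvPolynomial.algebraMap_eq, ← Ideal.Quotient.mkₐ_eq_mk F, AlgHom.commutes,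
      AdjoinRoot.algebraMap_eq' (S := F)]
    rfl
  · intro i
    show MvPolynomial.aeval _ (MvPolynomial.X i)
      = AdjoinRoot.of (fBar T) (Ideal.Quotient.mk _ (MvPolynomial.X i))
    rw [MvPolynomial.aeval_X]
    rfl

lemma aeval_of_ntGen (p : MvPolynomial (Fin n) F) :
    MvPolynomial.aeval (R := F) (fun j => AdjoinRoot.of (fBar T) (ntGen (Tsub T) j)) p
      = AdjoinRoot.of (fBar T) (Ideal.Quotient.mk _ p) :=
  RingHom.congr_fun (aeval_of_comp T) p

lemma vmap_comp_castSucc :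
    (vmap T) ∘ Fin.castSucc = fun j => AdjoinRoot.of (fBar T) (ntGen (Tsub T) j) := by
  funext j; exact vmap_castSucc T j

lemma aeval_vmap_rel (i : Fin (n+1)) :
    MvPolynomial.aeval (vmap T) (ntRel T i) = 0 := by
  induction i using Fin.lastCases with
  | last =>
      rw [ntRel_last, map_sub, map_mul, map_pow, MvPolynomial.aeval_X, vmap_last,
        MvPolynomial.aeval_rename, vmap_comp_castSucc, aeval_of_ntGen]
      have h := AdjoinRoot.eval₂_root (fBar T)
      rw [fBar, Polynomial.eval₂_sub, Polynomial.eval₂_mul, Polynomial.eval₂_pow,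
        Polynomial.eval₂_X, Polynomial.eval₂_C] at h
      exact h
  | cast i =>
      rw [← rename_ntRel, MvPolynomial.aeval_rename, vmap_comp_castSucc, aeval_of_ntGen,
        Ideal.Quotient.eq_zero_iff_mem.mpr (ntRel_mem _ i), map_zero]

lemma aeval_vmap_ideal : ∀ a ∈ ntIdeal T, MvPolynomial.aeval (vmap T) a = 0 := by
  intro a ha
  have hle : ntIdeal T ≤ RingHom.ker ((MvPolynomial.aeval (vmap T)).toRingHom :
      MvPolynomial (Fin (n+1)) F →+* AdjoinRoot (fBar T)) := by
    rw [ntIdeal_eq, Ideal.span_le]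
    rintro _ ⟨i, rfl⟩
    exact aeval_vmap_rel T i
  exact hle ha

/-- The forward algebra hom. -/
def fwd : NTAlg T →ₐ[F] AdjoinRoot (fBar T) :=
  Ideal.Quotient.liftₐ (ntIdeal T) (MvPolynomial.aeval (vmap T)) (aeval_vmap_ideal T)

lemma fwd_mk (p : MvPolynomial (Fin (n+1)) F) :
    fwd T (Ideal.Quotient.mk _ p) = MvPolynomial.aeval (vmap T) p :=
  Ideal.Quotient.liftₐ_apply _ _ _ _

lemma fwd_gen_cast (j : Fin n) :
    fwd T (ntGen T (Fin.castSucc j)) = AdjoinRoot.of (fBar T) (ntGen (Tsub T) j) := by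
  rw [ntGen, fwd_mk, MvPolynomial.aeval_X, vmap_castSucc]

lemma fwd_gen_last : fwd T (ntGen T (Fin.last n)) = AdjoinRoot.root (fBar T) := by
  rw [ntGen, fwd_mk, MvPolynomial.aeval_X, vmap_last]

/-- The lift of the smaller algebra into the bigger one. -/
def liftA : NTAlg (Tsub T) →ₐ[F] NTAlg T :=
  Ideal.Quotient.liftₐ (ntIdeal (Tsub T))
    ((Ideal.Quotient.mkₐ F (ntIdeal T)).comp (MvPolynomial.rename Fin.castSucc))
    (by
      intro a ha
      have hle : ntIdeal (Tsub T) ≤ RingHom.ker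
          ((((Ideal.Quotient.mkₐ F (ntIdeal T)).comp
            (MvPolynomial.rename Fin.castSucc)).toRingHom :
              MvPolynomial (Fin n) F →+* NTAlg T)) := by
        rw [ntIdeal_eq, Ideal.span_le]
        rintro _ ⟨i, rfl⟩
        simp only [SetLike.mem_coe, RingHom.mem_ker, AlgHom.toRingHom_eq_coe,
          RingHom.coe_coe, AlgHom.comp_apply]
        rw [rename_ntRel, Ideal.Quotient.mkₐ_eq_mk]
        exact Ideal.Quotient.eq_zero_iff_mem.mpr (ntRel_mem _ _)
      exact hle ha)

lemma liftA_mk (p : MvPolynomial (Fin n) F) :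
    liftA T (Ideal.Quotient.mk _ p) = Ideal.Quotient.mk _ (MvPolynomial.rename Fin.castSucc p) :=
  Ideal.Quotient.liftₐ_apply _ _ _ _

lemma liftA_gen (j : Fin n) : liftA T (ntGen (Tsub T) j) = ntGen T (Fin.castSucc j) := by
  rw [ntGen, liftA_mk, MvPolynomial.rename_X]; rfl

lemma ntRel_last' :
    ntRel T (Fin.last n)
      = MvPolynomial.X (Fin.last n) ^ 2 -
        (MvPolynomial.rename Fin.castSucc (sPoly T)) * MvPolynomial.X (Fin.last n) := by
  rw [ntRel_last]; rfl

lemma eval₂_liftA : (fBar T).eval₂ ((liftA T).toRingHom) (ntGen T (Fin.last n)) = 0 := by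
  rw [fBar]
  rw [Polynomial.eval₂_sub, Polynomial.eval₂_mul, Polynomial.eval₂_pow,
    Polynomial.eval₂_X, Polynomial.eval₂_C]
  show ntGen T (Fin.last n) ^ 2 - liftA T (sBar T) * ntGen T (Fin.last n) = 0
  rw [sBar, liftA_mk, ntGen, ← map_pow, ← map_mul, ← map_sub, ← ntRel_last']
  exact Ideal.Quotient.eq_zero_iff_mem.mpr (ntRel_mem _ _)

/-- The backward ring hom. -/
def bwd : AdjoinRoot (fBar T) →+* NTAlg T :=
  AdjoinRoot.lift ((liftA T).toRingHom) (ntGen T (Fin.last n)) (eval₂_liftA T)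

lemma bwd_of (x : NTAlg (Tsub T)) : bwd T (AdjoinRoot.of (fBar T) x) = liftA T x :=
  AdjoinRoot.lift_of _

lemma bwd_root : bwd T (AdjoinRoot.root (fBar T)) = ntGen T (Fin.last n) :=
  AdjoinRoot.lift_root _

lemma bwd_fwd (x : NTAlg T) : bwd T (fwd T x) = x := by
  have h : (bwd T).comp ((fwd T : NTAlg T →ₐ[F] AdjoinRoot (fBar T)) :
      NTAlg T →+* AdjoinRoot (fBar T)) = RingHom.id _ := by
    refine Ideal.Quotient.ringHom_ext ?_
    refine MvPolynomial.ringHom_ext ?_ ?_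
    · intro a
      simp only [RingHom.comp_apply, RingHom.coe_coe, RingHom.id_apply]
      rw [fwd_mk, MvPolynomial.aeval_C]
      rw [show algebraMap F (AdjoinRoot (fBar T)) a
          = AdjoinRoot.of (fBar T) (algebraMap F (NTAlg (Tsub T)) a) from
          by rw [AdjoinRoot.algebraMap_eq' (S := F)]; rfl]
      rw [bwd_of, AlgHom.commutes]
      rw [← MvPolynomial.algebraMap_eq, ← Ideal.Quotient.mkₐ_eq_mk F, AlgHom.commutes]
    · intro i
      simp only [RingHom.comp_apply, RingHom.coe_coe, RingHom.id_apply]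
      induction i using Fin.lastCases with
      | last =>
          rw [show (Ideal.Quotient.mk (ntIdeal T)) (MvPolynomial.X (Fin.last n))
              = ntGen T (Fin.last n) from rfl, fwd_gen_last, bwd_root]
      | cast j =>
          rw [show (Ideal.Quotient.mk (ntIdeal T)) (MvPolynomial.X (Fin.castSucc j))
              = ntGen T (Fin.castSucc j) from rfl, fwd_gen_cast, bwd_of, liftA_gen]
  exact RingHom.congr_fun h x

lemma fwd_surjective : Function.Surjective (fwd T) := by
  intro x
  induction x using AdjoinRoot.induction_on with
  | ih p =>
    induction p using Polynomial.induction_on' with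
    | add p q hp hq =>
        obtain ⟨y, hy⟩ := hp
        obtain ⟨z, hz⟩ := hq
        exact ⟨y + z, by rw [map_add, hy, hz, map_add]⟩
    | monomial k a =>
        obtain ⟨q, hq⟩ := Ideal.Quotient.mk_surjective (I := ntIdeal (Tsub T)) a
        refine ⟨Ideal.Quotient.mk _ (MvPolynomial.rename Fin.castSucc q)
          * ntGen T (Fin.last n) ^ k, ?_⟩
        rw [map_mul, map_pow, fwd_gen_last, fwd_mk, MvPolynomial.aeval_rename,
          vmap_comp_castSucc, aeval_of_ntGen, hq]
        rw [← Polynomial.C_mul_X_pow_eq_monomial, map_mul, map_pow, AdjoinRoot.mk_X,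
          AdjoinRoot.mk_C]

/-- Forward as an algebra equivalence. -/
def fwdEquiv : NTAlg T ≃ₐ[F] AdjoinRoot (fBar T) :=
  AlgEquiv.ofBijective (fwd T)
    ⟨Function.LeftInverse.injective (bwd_fwd T), fwd_surjective T⟩

lemma fwdEquiv_symm_apply (z : AdjoinRoot (fBar T)) : (fwdEquiv T).symm z = bwd T z := by
  apply (fwdEquiv T).injective
  rw [AlgEquiv.apply_symm_apply]
  obtain ⟨y, rfl⟩ := fwd_surjective T z
  rw [bwd_fwd]
  rfl

end NTAux

set_option synthInstance.maxHeartbeats 1000000 in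
set_option maxHeartbeats 2000000 in
theorem key : ∀ (n : ℕ) (T : Matrix (Fin n) (Fin n) F),
    ∃ b : Module.Basis (Finset (Fin n)) F (NTAlg T),
      ∀ s : Finset (Fin n), b s = ∏ i ∈ s, ntGen T i := by
  intro n
  induction n with
  | zero =>
    intro T
    have hbot : ntIdeal T = ⊥ := by
      unfold ntIdeal
      convert Ideal.span_empty
      ext p
      simp
    haveI : Nontrivial (NTAlg T) :=
      Ideal.Quotient.nontrivial_iff.mpr (by rw [hbot]; exact bot_ne_top)
    have hsurj : Function.Surjective (Algebra.ofId F (NTAlg T)) := by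
      intro x
      obtain ⟨p, rfl⟩ := Ideal.Quotient.mk_surjective x
      obtain ⟨a, rfl⟩ := MvPolynomial.C_surjective (Fin 0) p
      exact ⟨a, rfl⟩
    have hinj : Function.Injective (Algebra.ofId F (NTAlg T)) :=
      (Algebra.ofId F (NTAlg T)).toRingHom.injective
    let e := AlgEquiv.ofBijective (Algebra.ofId F (NTAlg T)) ⟨hinj, hsurj⟩
    haveI : Unique (Finset (Fin 0)) := ⟨⟨∅⟩, fun s => Finset.eq_empty_of_isEmpty s⟩
    refine ⟨(Module.Basis.singleton (Finset (Fin 0)) F).map e.toLinearEquiv, ?_⟩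
    intro s
    have hs : s = ∅ := Finset.eq_empty_of_isEmpty s
    subst hs
    rw [Module.Basis.map_apply, Module.Basis.singleton_apply, Finset.prod_empty]
    exact map_one e
  | succ n ih =>
    intro T
    obtain ⟨bA, hbA⟩ := ih (NTAux.Tsub T)
    haveI hnt : Nontrivial (NTAlg (NTAux.Tsub T)) := ⟨⟨bA ∅, 0, bA.ne_zero ∅⟩⟩
    let pb := AdjoinRoot.powerBasis' (NTAux.fBar_monic T)
    let c : Module.Basis (Fin 2) (NTAlg (NTAux.Tsub T)) (AdjoinRoot (NTAux.fBar T)) :=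
      pb.basis.reindex (finCongr (NTAux.fBar_natDegree T hnt))
    have hc : ∀ k : Fin 2, c k = AdjoinRoot.root (NTAux.fBar T) ^ (k : ℕ) := by
      intro k
      rw [Module.Basis.reindex_apply, pb.basis_eq_pow]
      simp [pb]
      rfl
    let e := NTAux.fwdEquiv T
    let b := ((bA.smulTower c).map e.symm.toLinearEquiv).reindex (NTAux.finsetSuccEquiv n)
    refine ⟨b, ?_⟩
    intro t
    obtain ⟨⟨s, k⟩, rfl⟩ := (NTAux.finsetSuccEquiv n).surjective t
    have hb1 : b ((NTAux.finsetSuccEquiv n) (s, k))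
        = e.symm (bA s • c k) := by
      rw [Module.Basis.reindex_apply, Equiv.symm_apply_apply, Module.Basis.map_apply, Module.Basis.smulTower_apply]
      rfl
    have hsm : ∀ (a : NTAlg (NTAux.Tsub T)) (m : ℕ),
        a • (AdjoinRoot.root (NTAux.fBar T)) ^ m
          = AdjoinRoot.of (NTAux.fBar T) a * AdjoinRoot.root (NTAux.fBar T) ^ m := by
      intro a m
      rw [← AdjoinRoot.mk_X, ← map_pow, AdjoinRoot.smul_mk, Polynomial.smul_eq_C_mul,
        map_mul, AdjoinRoot.mk_C, map_pow, AdjoinRoot.mk_X]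
    rw [hb1, hbA, hc k, hsm,
      NTAux.fwdEquiv_symm_apply, map_mul, map_pow, NTAux.bwd_of, NTAux.bwd_root,
      map_prod]
    have hgens : ∀ j : Fin n, NTAux.liftA T (ntGen (NTAux.Tsub T) j)
        = ntGen T (Fin.castSucc j) := NTAux.liftA_gen T
    simp only [hgens]
    -- now compute the RHS product
    have happ : (NTAux.finsetSuccEquiv n) (s, k)
        = s.map Fin.castSuccEmb ∪ (if k = 1 then {Fin.last n} else ∅) := rfl
    have hdisj : Disjoint (s.map Fin.castSuccEmb)
        (if k = 1 then ({Fin.last n} : Finset (Fin (n+1))) else ∅) := by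
      split
      · simp only [Finset.disjoint_singleton_right, Finset.mem_map, Fin.coe_castSuccEmb]
        rintro ⟨j, -, hj⟩
        exact absurd hj (Fin.castSucc_lt_last j).ne
      · exact Finset.disjoint_empty_right _
    rw [happ, Finset.prod_union hdisj, Finset.prod_map]
    simp only [Fin.coe_castSuccEmb]
    congr 1
    fin_cases k
    · simp
    · simp

theorem stmt1' {n : ℕ} (T : Matrix (Fin n) (Fin n) F) :
    Module.finrank F (NTAlg T) = 2 ^ n ∧
    ∃ b : Module.Basis (Finset (Fin n)) F (NTAlg T),
      ∀ s : Finset (Fin n), b s = ∏ i ∈ s, ntGen T i := by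
  obtain ⟨b, hb⟩ := key n T
  refine ⟨?_, b, hb⟩
  rw [Module.finrank_eq_card_basis b, Fintype.card_finset, Fintype.card_fin]

/-- `A(T)` has dimension `2 ^ n`, with basis the square-free monomials in the generators. -/
theorem stmt1 {n : ℕ} (h2 : (2 : F) ≠ 0) (T : Matrix (Fin n) (Fin n) F) (hT : SLT T) :
    Module.finrank F (NTAlg T) = 2 ^ n ∧
    ∃ b : Module.Basis (Finset (Fin n)) F (NTAlg T), ∀ s : Finset (Fin n), b s = ∏ i ∈ s, ntGen T i :=
  stmt1' T
end
end

section
/- Let F be a field of characteristic ≠ 2 and T, S strictly lower triangular n×n matrices over F. An n×n matrix Γ = [γ_{ij}] defines (via X_j ↦ Σ_i γ_{ij} Y_i) an isomorphism of F-algebras A(T) → A(S) if and only if Γ is invertible and its entries satisfy: 2 γ_{ir} γ_{kr} + γ_{kr}² s_{ki} = Σ_{j<r} t_{rj} (γ_{kj} γ_{kr} s_{ki} + γ_{kj} γ_{ir} + γ_{ij} γ_{kr}) for all 1 ≤ r ≤ n and 1 ≤ i < k ≤ n. -/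
open scoped BigOperators

noncomputable section

variable {F : Type} [Field F]

namespace Stmt3Aux

open MvPolynomial Finset

variable {n : ℕ}

/-- The upper-triangular index pairs. -/
def UT (n : ℕ) : Finset (Fin n × Fin n) := Finset.univ.filter fun p => p.1 < p.2

/-- The generators of the relation ideal. -/
def g (T : Matrix (Fin n) (Fin n) F) (r : Fin n) : MvPolynomial (Fin n) F :=
  X r ^ 2 - ∑ j ∈ Finset.univ.filter (fun j => j < r), C (T r j) * X j * X r

lemma ntIdeal_eq (T : Matrix (Fin n) (Fin n) F) :
    ntIdeal T = Ideal.span (Set.range (g T)) := by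
  unfold ntIdeal g
  congr 1
  ext p
  constructor
  · rintro ⟨i, rfl⟩; exact ⟨i, rfl⟩
  · rintro ⟨i, rfl⟩; exact ⟨i, rfl⟩

lemma g_mem_ideal (T : Matrix (Fin n) (Fin n) F) (r : Fin n) : g T r ∈ ntIdeal T := by
  rw [ntIdeal_eq]
  exact Ideal.subset_span ⟨r, rfl⟩

/- ### Finsupp / coefficient helpers -/

lemma deg_add (a b : Fin n →₀ ℕ) : (a + b).degree = a.degree + b.degree := by
  simp [Finsupp.degree_eq_weight_one, map_add]

lemma deg_single (i : Fin n) (k : ℕ) : (Finsupp.single i k).degree = k := by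
  simp [Finsupp.degree_eq_weight_one, Finsupp.weight_apply, Finsupp.sum_single_index]

lemma pair_ne_sq {i k r : Fin n} (hik : i ≠ k) :
    Finsupp.single i 1 + Finsupp.single k 1 ≠ Finsupp.single r 2 := by
  intro h
  have hi := DFunLike.congr_fun h i
  have hk := DFunLike.congr_fun h k
  have hik' : (i : ℕ) ≠ (k : ℕ) := by simpa [Fin.ext_iff] using hik
  simp only [Finsupp.add_apply, Finsupp.single_apply, Fin.ext_iff] at hi hk
  split_ifs at hi hk <;> omega

lemma pair_eq_pair {i k i' k' : Fin n} (h1 : i < k) (h2 : i' < k')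
    (h : Finsupp.single i 1 + Finsupp.single k 1
       = Finsupp.single i' 1 + Finsupp.single k' 1) : i = i' ∧ k = k' := by
  rcases (Finsupp.single_add_single_eq_single_add_single one_ne_zero one_ne_zero).mp h with
    ⟨ha, hb⟩ | ⟨-, ha, hb⟩ | ⟨hc, -, -⟩
  · exact ⟨ha, hb⟩
  · subst ha; subst hb; exact absurd (h1.trans h2) (lt_irrefl _)
  · norm_num at hc

lemma X_mul_X (i k : Fin n) :
    (X i * X k : MvPolynomial (Fin n) F)
      = monomial (Finsupp.single i 1 + Finsupp.single k 1) 1 := by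
  rw [X, X, monomial_mul, one_mul]

lemma coeff_sq_g (T : Matrix (Fin n) (Fin n) F) (r r' : Fin n) :
    coeff (Finsupp.single r 2) (g T r') = if r' = r then 1 else 0 := by
  unfold g
  rw [coeff_sub, X_pow_eq_monomial, coeff_monomial]
  have : ∀ j ∈ Finset.univ.filter (fun j => j < r'),
      coeff (Finsupp.single r 2) (C (T r' j) * X j * X r') = 0 := by
    intro j hj
    have hj' : j < r' := by simpa using hj
    rw [mul_assoc, coeff_C_mul, X_mul_X, coeff_monomial,
      if_neg (pair_ne_sq (ne_of_lt hj')), mul_zero]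
  rw [coeff_sum, Finset.sum_eq_zero this, sub_zero]
  simp [Finsupp.single_left_inj (by norm_num : (2:ℕ) ≠ 0)]

lemma coeff_sq_pair {i k : Fin n} (r : Fin n) (hik : i ≠ k) :
    coeff (Finsupp.single r 2) (X i * X k : MvPolynomial (Fin n) F) = 0 := by
  rw [X_mul_X, coeff_monomial, if_neg (pair_ne_sq hik)]

lemma coeff_pair_pair {i k i' k' : Fin n} (h1 : i < k) (h2 : i' < k') :
    coeff (Finsupp.single i 1 + Finsupp.single k 1)
      (X i' * X k' : MvPolynomial (Fin n) F) = if i' = i ∧ k' = k then 1 else 0 := by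
  rw [X_mul_X, coeff_monomial]
  by_cases h : i' = i ∧ k' = k
  · rw [if_pos h, if_pos]; rw [h.1, h.2]
  · rw [if_neg h, if_neg]
    intro hc
    exact h ⟨(pair_eq_pair h2 h1 hc).1, (pair_eq_pair h2 h1 hc).2⟩

/- ### Homogeneous component facts -/

lemma g_isHom (T : Matrix (Fin n) (Fin n) F) (r : Fin n) :
    (g T r) ∈ homogeneousSubmodule (Fin n) F 2 := by
  rw [mem_homogeneousSubmodule]
  apply MvPolynomial.IsHomogeneous.sub
  · have h := (isHomogeneous_X F r).pow 2
    simpa using h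
  · apply IsHomogeneous.sum
    intro j _
    have h := ((isHomogeneous_C (Fin n) (T r j)).mul (isHomogeneous_X F j)).mul
      (isHomogeneous_X F r)
    simpa using h

lemma homComp_two_mul (q p : MvPolynomial (Fin n) F)
    (hp : p ∈ homogeneousSubmodule (Fin n) F 2) :
    homogeneousComponent 2 (q * p) = C (constantCoeff q) * p := by
  rw [mem_homogeneousSubmodule] at hp
  ext d
  rw [coeff_homogeneousComponent, coeff_C_mul]
  by_cases hd : d.degree = 2
  · rw [if_pos hd, coeff_mul]
    rw [Finset.sum_eq_single (0, d)]
    · simp [constantCoeff_eq]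
    · rintro ⟨a, b⟩ hab hne
      rw [Finset.HasAntidiagonal.mem_antidiagonal] at hab
      by_cases hb : coeff b p = 0
      · simp [hb]
      · exfalso
        have hdb : b.degree = 2 := by
          by_contra hc
          exact hb (hp.coeff_eq_zero hc)
        have hda : a.degree = 0 := by
          have := deg_add a b
          rw [hab, hd, hdb] at this
          omega
        have ha0 : a = 0 := (Finsupp.degree_eq_zero_iff a).mp hda
        subst ha0
        rw [zero_add] at hab
        subst hab
        exact hne rfl
    · intro hne
      exfalso
      exact hne (Finset.HasAntidiagonal.mem_antidiagonal.mpr (zero_add d))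
  · rw [if_neg hd, hp.coeff_eq_zero hd, mul_zero]

lemma homComp_one_mul (q p : MvPolynomial (Fin n) F)
    (hp : p ∈ homogeneousSubmodule (Fin n) F 2) :
    homogeneousComponent 1 (q * p) = 0 := by
  rw [mem_homogeneousSubmodule] at hp
  ext d
  rw [coeff_homogeneousComponent, coeff_zero]
  by_cases hd : d.degree = 1
  · rw [if_pos hd, coeff_mul]
    apply Finset.sum_eq_zero
    rintro ⟨a, b⟩ hab
    rw [Finset.HasAntidiagonal.mem_antidiagonal] at hab
    by_cases hb : coeff b p = 0
    · simp [hb]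
    · exfalso
      have hdb : b.degree = 2 := by
        by_contra hc
        exact hb (hp.coeff_eq_zero hc)
      have := deg_add a b
      rw [hab, hd, hdb] at this
      omega
  · rw [if_neg hd]

/- ### Independence lemmas -/

lemma lin_indep (T : Matrix (Fin n) (Fin n) F) (c : Fin n → F)
    (h : (∑ r : Fin n, C (c r) * X r) ∈ ntIdeal T) : ∀ r, c r = 0 := by
  rw [ntIdeal_eq] at h
  obtain ⟨q, hq⟩ := Ideal.mem_span_range_iff_exists_fun.mp h
  intro r
  have h1 : homogeneousComponent 1 (∑ i : Fin n, q i * g T i) = 0 := by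
    rw [map_sum]
    exact Finset.sum_eq_zero fun i _ => homComp_one_mul _ _ (g_isHom T i)
  have hmem : (∑ r : Fin n, C (c r) * X r) ∈ homogeneousSubmodule (Fin n) F 1 := by
    apply Submodule.sum_mem
    intro i _
    rw [mem_homogeneousSubmodule]
    have h := (isHomogeneous_C (Fin n) (c i)).mul (isHomogeneous_X F i)
    simpa using h
  have hfix : homogeneousComponent 1 (∑ r : Fin n, C (c r) * X r)
      = ∑ r : Fin n, C (c r) * X r := by
    rw [homogeneousComponent_of_mem hmem]; exact if_pos rfl
  have h2 : (∑ r : Fin n, C (c r) * X r) = 0 := by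
    rw [← hfix, ← hq]; exact h1
  have h3 := congrArg (coeff (Finsupp.single r 1)) h2
  rw [coeff_sum, coeff_zero] at h3
  have h4 : ∀ b : Fin n, coeff (Finsupp.single r 1) (C (c b) * X b)
      = if b = r then c b else 0 := by
    intro b
    rw [coeff_C_mul, X, coeff_monomial]
    by_cases hb : b = r
    · rw [if_pos (by rw [hb]), if_pos hb, mul_one]
    · rw [if_neg (fun hc => hb (Finsupp.single_left_inj one_ne_zero |>.mp hc)),
        if_neg hb, mul_zero]
  rw [Finset.sum_congr rfl (fun b _ => h4 b), Finset.sum_ite_eq' Finset.univ r c,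
    if_pos (Finset.mem_univ r)] at h3
  exact h3

lemma rep_coeff (T : Matrix (Fin n) (Fin n) F) (d : Fin n × Fin n → F) (l : Fin n → F)
    (h : (∑ p ∈ UT n, C (d p) * (X p.1 * X p.2)) = ∑ r : Fin n, l r • g T r) :
    ∀ p ∈ UT n, d p = 0 := by
  have hl : ∀ r, l r = 0 := by
    intro r
    have h3 := congrArg (coeff (Finsupp.single r 2)) h
    rw [coeff_sum, coeff_sum] at h3
    have hLHS : ∑ p ∈ UT n, coeff (Finsupp.single r 2) (C (d p) * (X p.1 * X p.2)) = 0 := by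
      apply Finset.sum_eq_zero
      intro p hp
      have hp' : p.1 < p.2 := by simpa [UT] using hp
      rw [coeff_C_mul, coeff_sq_pair r (ne_of_lt hp'), mul_zero]
    have hterm : ∀ b : Fin n, coeff (Finsupp.single r 2) (l b • g T b)
        = if b = r then l b else 0 := by
      intro b
      rw [coeff_smul, coeff_sq_g, smul_eq_mul]
      by_cases hb : b = r
      · rw [if_pos hb, if_pos hb, mul_one]
      · rw [if_neg hb, if_neg hb, mul_zero]
    rw [hLHS, Finset.sum_congr rfl (fun b _ => hterm b),
      Finset.sum_ite_eq' Finset.univ r l, if_pos (Finset.mem_univ r)] at h3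
    exact h3.symm
  have h0 : (∑ p ∈ UT n, C (d p) * (X p.1 * X p.2)) = 0 := by
    rw [h]
    exact Finset.sum_eq_zero fun r _ => by rw [hl r, zero_smul]
  intro p hp
  have hp' : p.1 < p.2 := by simpa [UT] using hp
  have h3 := congrArg (coeff (Finsupp.single p.1 1 + Finsupp.single p.2 1)) h0
  rw [coeff_sum, coeff_zero] at h3
  have hterm : ∀ b ∈ UT n, coeff (Finsupp.single p.1 1 + Finsupp.single p.2 1)
      (C (d b) * (X b.1 * X b.2)) = if b = p then d b else 0 := by
    intro b hb
    have hb' : b.1 < b.2 := by simpa [UT] using hb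
    rw [coeff_C_mul, coeff_pair_pair hp' hb']
    by_cases hbp : b = p
    · rw [if_pos ⟨by rw [hbp], by rw [hbp]⟩, if_pos hbp, mul_one]
    · rw [if_neg (fun hc => hbp (Prod.ext hc.1 hc.2)), if_neg hbp, mul_zero]
  rw [Finset.sum_congr rfl hterm, Finset.sum_ite_eq' (UT n) p d, if_pos hp] at h3
  exact h3

lemma sqfree_indep (T : Matrix (Fin n) (Fin n) F) (d : Fin n × Fin n → F)
    (h : (∑ p ∈ UT n, C (d p) * (X p.1 * X p.2)) ∈ ntIdeal T) :
    ∀ p ∈ UT n, d p = 0 := by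
  rw [ntIdeal_eq] at h
  obtain ⟨q, hq⟩ := Ideal.mem_span_range_iff_exists_fun.mp h
  apply rep_coeff T d (fun r => constantCoeff (q r))
  have h2 : homogeneousComponent 2 (∑ p ∈ UT n, C (d p) * (X p.1 * X p.2))
      = ∑ p ∈ UT n, C (d p) * (X p.1 * X p.2) := by
    have hmem : (∑ p ∈ UT n, C (d p) * (X p.1 * X p.2))
        ∈ homogeneousSubmodule (Fin n) F 2 := by
      apply Submodule.sum_mem
      intro p _
      rw [mem_homogeneousSubmodule]
      simpa using (isHomogeneous_C (Fin n) (d p)).mul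
        ((isHomogeneous_X F p.1).mul (isHomogeneous_X F p.2))
    rw [homogeneousComponent_of_mem hmem, if_pos rfl]
  rw [← h2, ← hq, map_sum]
  apply Finset.sum_congr rfl
  intro r _
  rw [homComp_two_mul _ _ (g_isHom T r), smul_eq_C_mul]


/- ### Summation helpers -/

lemma sum_lt_eq_UT {A : Type} [AddCommMonoid A] (f : Fin n → Fin n → A) :
    ∑ k : Fin n, ∑ i ∈ Finset.univ.filter (fun i => i < k), f i k
      = ∑ p ∈ UT n, f p.1 p.2 :=
  calc ∑ k : Fin n, ∑ i ∈ Finset.univ.filter (fun i => i < k), f i k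
      = ∑ k : Fin n, ∑ i : Fin n, if i < k then f i k else 0 :=
        Finset.sum_congr rfl fun k _ => Finset.sum_filter _ _
    _ = ∑ i : Fin n, ∑ k : Fin n, if i < k then f i k else 0 := Finset.sum_comm
    _ = ∑ p : Fin n × Fin n, if p.1 < p.2 then f p.1 p.2 else 0 := by
        rw [Fintype.sum_prod_type]
    _ = ∑ p ∈ UT n, f p.1 p.2 := (Finset.sum_filter _ _).symm

lemma sum_split {A : Type} [AddCommMonoid A] (f : Fin n → Fin n → A) :
    ∑ i : Fin n, ∑ k : Fin n, f i k
      = ∑ p ∈ UT n, (f p.1 p.2 + f p.2 p.1) + ∑ i : Fin n, f i i := by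
  have tri : ∀ p : Fin n × Fin n, f p.1 p.2 =
      (if p.1 < p.2 then f p.1 p.2 else 0) + ((if p.2 < p.1 then f p.1 p.2 else 0)
        + (if p.1 = p.2 then f p.1 p.2 else 0)) := by
    intro p
    rcases lt_trichotomy p.1 p.2 with h|h|h
    · rw [if_pos h, if_neg (lt_asymm h), if_neg (ne_of_lt h), add_zero, add_zero]
    · rw [if_neg (by rw [h]; exact lt_irrefl _), if_neg (by rw [h]; exact lt_irrefl _),
        if_pos h, zero_add, zero_add]
    · rw [if_neg (lt_asymm h), if_pos h, if_neg (ne_of_gt h), zero_add, add_zero]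
  have hswap : ∑ p : Fin n × Fin n, (if p.2 < p.1 then f p.1 p.2 else 0)
      = ∑ p ∈ UT n, f p.2 p.1 := by
    rw [← Finset.sum_filter]
    apply Finset.sum_nbij' (fun p => Prod.swap p) (fun p => Prod.swap p)
    · intro p hp; simp only [Finset.mem_filter, Finset.mem_univ, true_and, UT] at hp ⊢
      exact hp
    · intro p hp; simp only [Finset.mem_filter, Finset.mem_univ, true_and, UT] at hp ⊢
      exact hp
    · intro p _; rfl
    · intro p _; rfl
    · intro p _; rfl
  have hdiag : ∑ p : Fin n × Fin n, (if p.1 = p.2 then f p.1 p.2 else 0)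
      = ∑ i : Fin n, f i i := by
    rw [← Finset.sum_filter]
    apply Finset.sum_nbij' (fun p => p.1) (fun i => (i, i))
    · intro p _; exact Finset.mem_univ _
    · intro i _; simp
    · intro p hp
      simp only [Finset.mem_filter, Finset.mem_univ, true_and] at hp
      exact Prod.ext rfl hp
    · intro i _; rfl
    · intro p hp
      simp only [Finset.mem_filter, Finset.mem_univ, true_and] at hp
      rw [hp]
  calc ∑ i : Fin n, ∑ k : Fin n, f i k
      = ∑ p : Fin n × Fin n, f p.1 p.2 := by rw [Fintype.sum_prod_type]
    _ = ∑ p : Fin n × Fin n, ((if p.1 < p.2 then f p.1 p.2 else 0)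
          + ((if p.2 < p.1 then f p.1 p.2 else 0) + (if p.1 = p.2 then f p.1 p.2 else 0))) :=
        Finset.sum_congr rfl fun p _ => tri p
    _ = ∑ p : Fin n × Fin n, (if p.1 < p.2 then f p.1 p.2 else 0)
          + (∑ p : Fin n × Fin n, (if p.2 < p.1 then f p.1 p.2 else 0)
            + ∑ p : Fin n × Fin n, (if p.1 = p.2 then f p.1 p.2 else 0)) := by
        rw [Finset.sum_add_distrib, Finset.sum_add_distrib]
    _ = ∑ p ∈ UT n, (f p.1 p.2 + f p.2 p.1) + ∑ i : Fin n, f i i := by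
        rw [hswap, hdiag, ← Finset.sum_filter]
        simp only [UT]
        rw [← add_assoc, ← Finset.sum_add_distrib]

/- ### The key computation -/

/-- The fundamental coefficient. -/
def cf (T S Γ : Matrix (Fin n) (Fin n) F) (r : Fin n) (p : Fin n × Fin n) : F :=
  (2 * Γ p.1 r * Γ p.2 r + Γ p.2 r ^ 2 * S p.2 p.1)
  - ∑ j ∈ Finset.univ.filter (fun j => j < r),
      T r j * (Γ p.2 j * Γ p.2 r * S p.2 p.1 + Γ p.2 j * Γ p.1 r + Γ p.1 j * Γ p.2 r)

variable {A : Type} [CommRing A] [Algebra F A]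

lemma mul_expand (S : Matrix (Fin n) (Fin n) F) (y : Fin n → A)
    (hy : ∀ k, y k ^ 2 = ∑ i ∈ Finset.univ.filter (fun i => i < k), S k i • (y i * y k))
    (u v : Fin n → F) :
    (∑ i : Fin n, u i • y i) * (∑ i : Fin n, v i • y i)
      = ∑ p ∈ UT n, (u p.1 * v p.2 + u p.2 * v p.1 + u p.2 * v p.2 * S p.2 p.1)
          • (y p.1 * y p.2) := by
  have hdiag : ∀ i : Fin n, (u i * v i) • (y i * y i)
      = ∑ j ∈ Finset.univ.filter (fun j => j < i), (u i * v i * S i j) • (y j * y i) := by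
    intro i
    rw [← sq, hy i, Finset.smul_sum]
    exact Finset.sum_congr rfl fun j _ => by rw [smul_smul]
  calc (∑ i : Fin n, u i • y i) * (∑ i : Fin n, v i • y i)
      = ∑ i : Fin n, ∑ k : Fin n, (u i • y i) * (v k • y k) := Finset.sum_mul_sum _ _ _ _
    _ = ∑ i : Fin n, ∑ k : Fin n, (u i * v k) • (y i * y k) := by
        exact Finset.sum_congr rfl fun i _ => Finset.sum_congr rfl fun k _ =>
          smul_mul_smul_comm _ _ _ _
    _ = ∑ p ∈ UT n, ((u p.1 * v p.2) • (y p.1 * y p.2) + (u p.2 * v p.1) • (y p.2 * y p.1))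
          + ∑ i : Fin n, (u i * v i) • (y i * y i) := sum_split _
    _ = ∑ p ∈ UT n, ((u p.1 * v p.2) • (y p.1 * y p.2) + (u p.2 * v p.1) • (y p.2 * y p.1))
          + ∑ p ∈ UT n, (u p.2 * v p.2 * S p.2 p.1) • (y p.1 * y p.2) := by
        rw [Finset.sum_congr rfl fun i _ => hdiag i, sum_lt_eq_UT
          (fun j i => (u i * v i * S i j) • (y j * y i))]
    _ = ∑ p ∈ UT n, (u p.1 * v p.2 + u p.2 * v p.1 + u p.2 * v p.2 * S p.2 p.1)
          • (y p.1 * y p.2) := by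
        rw [← Finset.sum_add_distrib]
        refine Finset.sum_congr rfl fun p _ => ?_
        rw [mul_comm (y p.2) (y p.1), add_smul, add_smul]

lemma key_calc (S T Γ : Matrix (Fin n) (Fin n) F) (y : Fin n → A)
    (hy : ∀ k, y k ^ 2 = ∑ i ∈ Finset.univ.filter (fun i => i < k), S k i • (y i * y k))
    (r : Fin n) :
    (∑ i : Fin n, Γ i r • y i) ^ 2
      - ∑ j ∈ Finset.univ.filter (fun j => j < r),
          T r j • ((∑ i : Fin n, Γ i j • y i) * (∑ i : Fin n, Γ i r • y i))
      = ∑ p ∈ UT n, cf T S Γ r p • (y p.1 * y p.2) := by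
  have hj : ∀ j : Fin n, T r j • ((∑ i : Fin n, Γ i j • y i) * (∑ i : Fin n, Γ i r • y i))
      = ∑ p ∈ UT n, (T r j * (Γ p.1 j * Γ p.2 r + Γ p.2 j * Γ p.1 r
          + Γ p.2 j * Γ p.2 r * S p.2 p.1)) • (y p.1 * y p.2) := by
    intro j
    rw [mul_expand S y hy (fun i => Γ i j) (fun i => Γ i r), Finset.smul_sum]
    exact Finset.sum_congr rfl fun p _ => by rw [smul_smul]
  rw [sq, mul_expand S y hy (fun i => Γ i r) (fun i => Γ i r),
    Finset.sum_congr rfl fun j _ => hj j, Finset.sum_comm, ← Finset.sum_sub_distrib]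
  refine Finset.sum_congr rfl fun p _ => ?_
  rw [← Finset.sum_smul, ← sub_smul]
  congr 1
  unfold cf
  congr 1
  · ring
  · exact Finset.sum_congr rfl fun j _ => by ring

/- ### Quotient algebra facts -/

lemma mk_C_mul {I : Ideal (MvPolynomial (Fin n) F)} (a : F) (p : MvPolynomial (Fin n) F) :
    Ideal.Quotient.mk I (C a * p) = a • Ideal.Quotient.mk I p := by
  rw [← smul_eq_C_mul, ← Ideal.Quotient.mkₐ_eq_mk (R₁ := F), map_smul]

lemma gen_rel (S : Matrix (Fin n) (Fin n) F) (k : Fin n) :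
    (ntGen S k) ^ 2 = ∑ i ∈ Finset.univ.filter (fun i => i < k),
      S k i • (ntGen S i * ntGen S k) := by
  have h0 : Ideal.Quotient.mk (ntIdeal S) (g S k) = 0 :=
    Ideal.Quotient.eq_zero_iff_mem.mpr (g_mem_ideal S k)
  unfold g at h0
  rw [map_sub, sub_eq_zero, map_pow, map_sum] at h0
  unfold ntGen
  rw [h0]
  exact Finset.sum_congr rfl fun i _ => by
    rw [mul_assoc, mk_C_mul, map_mul]

lemma collapse (z : Fin n → A) (a : Fin n → F) (B : Matrix (Fin n) (Fin n) F) :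
    ∑ r : Fin n, a r • ∑ i : Fin n, B i r • z i
      = ∑ i : Fin n, (∑ r : Fin n, B i r * a r) • z i := by
  have h1 : ∀ r : Fin n, a r • ∑ i : Fin n, B i r • z i
      = ∑ i : Fin n, (B i r * a r) • z i := by
    intro r
    rw [Finset.smul_sum]
    exact Finset.sum_congr rfl fun i _ => by rw [smul_smul, mul_comm]
  rw [Finset.sum_congr rfl fun r _ => h1 r, Finset.sum_comm]
  exact Finset.sum_congr rfl fun i _ => (Finset.sum_smul).symm

lemma one_collapse (z : Fin n → A) (k : Fin n) :
    ∑ i : Fin n, ((1 : Matrix (Fin n) (Fin n) F) i k) • z i = z k := by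
  simp [Matrix.one_apply, ite_smul]

lemma sum_pairs_mk (S : Matrix (Fin n) (Fin n) F) (c : Fin n × Fin n → F) :
    ∑ p ∈ UT n, c p • (ntGen S p.1 * ntGen S p.2)
      = Ideal.Quotient.mk (ntIdeal S) (∑ p ∈ UT n, C (c p) * (X p.1 * X p.2)) := by
  rw [map_sum]
  exact Finset.sum_congr rfl fun p _ => by rw [mk_C_mul, map_mul]; rfl


/- ### Coefficient of squares in a combination of generators -/

lemma coeff_sum_g (S : Matrix (Fin n) (Fin n) F) (l : Fin n → F) (r : Fin n) :
    coeff (Finsupp.single r 2) (∑ b : Fin n, l b • g S b) = l r := by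
  rw [coeff_sum]
  have hterm : ∀ b : Fin n, coeff (Finsupp.single r 2) (l b • g S b)
      = if b = r then l b else 0 := by
    intro b
    rw [coeff_smul, coeff_sq_g, smul_eq_mul]
    by_cases hb : b = r
    · rw [if_pos hb, if_pos hb, mul_one]
    · rw [if_neg hb, if_neg hb, mul_zero]
  rw [Finset.sum_congr rfl fun b _ => hterm b, Finset.sum_ite_eq' Finset.univ r l,
    if_pos (Finset.mem_univ r)]

lemma g_linIndep (S : Matrix (Fin n) (Fin n) F) : LinearIndependent F (g S) := by
  rw [Fintype.linearIndependent_iff]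
  intro l hl r
  have := congrArg (coeff (Finsupp.single r 2)) hl
  rwa [coeff_sum_g, coeff_zero] at this

lemma ideal_homog_mem_span (S : Matrix (Fin n) (Fin n) F) {p : MvPolynomial (Fin n) F}
    (h1 : p ∈ ntIdeal S) (h2 : p ∈ homogeneousSubmodule (Fin n) F 2) :
    p ∈ Submodule.span F (Set.range (g S)) := by
  rw [ntIdeal_eq] at h1
  obtain ⟨q, hq⟩ := Ideal.mem_span_range_iff_exists_fun.mp h1
  have hrep : p = ∑ r : Fin n, constantCoeff (q r) • g S r := by
    have hfix : homogeneousComponent 2 p = p := by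
      rw [homogeneousComponent_of_mem h2]; exact if_pos rfl
    rw [← hfix, ← hq, map_sum]
    exact Finset.sum_congr rfl fun r _ => by
      rw [homComp_two_mul _ _ (g_isHom S r), smul_eq_C_mul]
  rw [hrep]
  exact Submodule.sum_mem _ fun r _ =>
    Submodule.smul_mem _ _ (Submodule.subset_span ⟨r, rfl⟩)

/- ### The substitution endomorphism of the polynomial ring -/

/-- Substitution `X r ↦ ∑ i, Γ i r • X i`. -/
def subst (Γ : Matrix (Fin n) (Fin n) F) :
    MvPolynomial (Fin n) F →ₐ[F] MvPolynomial (Fin n) F :=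
  aeval fun r => ∑ i : Fin n, Γ i r • X i

lemma subst_X (Γ : Matrix (Fin n) (Fin n) F) (r : Fin n) :
    subst Γ (X r) = ∑ i : Fin n, Γ i r • X i := by
  rw [subst, aeval_X]

lemma subst_comp (Γ Δ : Matrix (Fin n) (Fin n) F) (h : Δ * Γ = 1) :
    (subst Δ).comp (subst Γ) = AlgHom.id F (MvPolynomial (Fin n) F) := by
  refine MvPolynomial.algHom_ext fun r => ?_
  rw [AlgHom.comp_apply, AlgHom.coe_id, id, subst_X, map_sum]
  have h1 : ∀ i : Fin n, subst Δ (Γ i r • X i) = Γ i r • ∑ k : Fin n, Δ k i • X k := by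
    intro i; rw [map_smul, subst_X]
  rw [Finset.sum_congr rfl fun i _ => h1 i,
    collapse (fun k => (X k : MvPolynomial (Fin n) F)) (fun i => Γ i r) Δ]
  have hent : ∀ k : Fin n, (∑ i : Fin n, Δ k i * Γ i r) = (1 : Matrix (Fin n) (Fin n) F) k r := by
    intro k; rw [← Matrix.mul_apply, h]
  rw [Finset.sum_congr rfl fun k _ => by rw [hent k]]
  exact one_collapse (fun k => (X k : MvPolynomial (Fin n) F)) r

lemma subst_inj (Γ Δ : Matrix (Fin n) (Fin n) F) (h : Δ * Γ = 1) :
    Function.Injective (subst Γ) := by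
  intro a b hab
  have h2 := congrArg (subst Δ) hab
  rw [← AlgHom.comp_apply, ← AlgHom.comp_apply, subst_comp Γ Δ h] at h2
  exact h2

lemma subst_lin_isHom (Γ : Matrix (Fin n) (Fin n) F) (r : Fin n) :
    subst Γ (X r) ∈ homogeneousSubmodule (Fin n) F 1 := by
  rw [subst_X]
  exact Submodule.sum_mem _ fun i _ => Submodule.smul_mem _ _ (by
    rw [mem_homogeneousSubmodule]; exact isHomogeneous_X F i)

lemma subst_g_isHom (Γ T : Matrix (Fin n) (Fin n) F) (r : Fin n) :
    subst Γ (g T r) ∈ homogeneousSubmodule (Fin n) F 2 := by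
  unfold g
  rw [map_sub, map_pow, map_sum]
  apply Submodule.sub_mem
  · rw [mem_homogeneousSubmodule]
    have h := ((mem_homogeneousSubmodule _ _).mp (subst_lin_isHom Γ r)).pow 2
    simpa using h
  · apply Submodule.sum_mem
    intro j _
    rw [map_mul, map_mul, mem_homogeneousSubmodule]
    have hC : subst Γ (C (T r j)) = C (T r j) := by
      rw [subst, aeval_C, MvPolynomial.algebraMap_eq]
    rw [hC]
    have h := ((isHomogeneous_C (Fin n) (T r j)).mul
        ((mem_homogeneousSubmodule _ _).mp (subst_lin_isHom Γ j))).mul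
      ((mem_homogeneousSubmodule _ _).mp (subst_lin_isHom Γ r))
    simpa using h

lemma subst_sq_isHom (Γ : Matrix (Fin n) (Fin n) F) (d : Fin n × Fin n → F) :
    subst Γ (∑ p ∈ UT n, C (d p) * (X p.1 * X p.2))
      ∈ homogeneousSubmodule (Fin n) F 2 := by
  rw [map_sum]
  apply Submodule.sum_mem
  intro p _
  rw [map_mul, map_mul, mem_homogeneousSubmodule]
  have hC : subst Γ (C (d p)) = C (d p) := by
    rw [subst, aeval_C, MvPolynomial.algebraMap_eq]
  rw [hC]
  have h := (isHomogeneous_C (Fin n) (d p)).mul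
    (((mem_homogeneousSubmodule _ _).mp (subst_lin_isHom Γ p.1)).mul
      ((mem_homogeneousSubmodule _ _).mp (subst_lin_isHom Γ p.2)))
  simpa using h

/- ### Construction of the algebra homomorphism -/

lemma mk_hom (T S Γ : Matrix (Fin n) (Fin n) F)
    (hc : ∀ r : Fin n, ∀ p ∈ UT n, cf T S Γ r p = 0) :
    ∃ φ : NTAlg T →ₐ[F] NTAlg S, ∀ r : Fin n,
      φ (ntGen T r) = ∑ i : Fin n, Γ i r • ntGen S i := by
  set f : Fin n → NTAlg S := fun r => ∑ i : Fin n, Γ i r • ntGen S i with hf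
  have hgen : ∀ r : Fin n, aeval f (g T r) = 0 := by
    intro r
    unfold g
    rw [map_sub, map_pow, map_sum]
    have hterm : ∀ j : Fin n, aeval f (C (T r j) * X j * X r) = T r j • (f j * f r) := by
      intro j
      rw [mul_assoc, map_mul, map_mul, aeval_C, aeval_X, aeval_X, ← Algebra.smul_def]
    rw [Finset.sum_congr rfl fun j _ => hterm j, aeval_X]
    have hkey := key_calc S T Γ (ntGen S) (gen_rel S) r
    simp only [hf]
    rw [hkey]
    exact Finset.sum_eq_zero fun p hp => by rw [hc r p hp, zero_smul]
  have hker : ∀ a ∈ ntIdeal T, aeval f a = 0 := by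
    intro a ha
    rw [ntIdeal_eq] at ha
    have hle : Ideal.span (Set.range (g T))
        ≤ RingHom.ker ((aeval f : MvPolynomial (Fin n) F →ₐ[F] NTAlg S) :
            MvPolynomial (Fin n) F →+* NTAlg S) := by
      rw [Ideal.span_le]
      rintro _ ⟨r, rfl⟩
      exact RingHom.mem_ker.mpr (hgen r)
    exact RingHom.mem_ker.mp (hle ha)
  refine ⟨Ideal.Quotient.liftₐ (ntIdeal T) (aeval f) hker, fun r => ?_⟩
  show Ideal.Quotient.liftₐ (ntIdeal T) (aeval f) hker
    (Ideal.Quotient.mk (ntIdeal T) (X r)) = _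
  show aeval f (X r) = _
  rw [aeval_X]

lemma mk_comp_subst (T S Γ : Matrix (Fin n) (Fin n) F) (φ : NTAlg T →ₐ[F] NTAlg S)
    (hφ : ∀ r : Fin n, φ (ntGen T r) = ∑ i : Fin n, Γ i r • ntGen S i) :
    (Ideal.Quotient.mkₐ F (ntIdeal S)).comp (subst Γ)
      = φ.comp (Ideal.Quotient.mkₐ F (ntIdeal T)) := by
  refine MvPolynomial.algHom_ext fun r => ?_
  rw [AlgHom.comp_apply, AlgHom.comp_apply, subst_X, map_sum]
  have h1 : ∀ i : Fin n, Ideal.Quotient.mkₐ F (ntIdeal S) (Γ i r • X i)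
      = Γ i r • ntGen S i := fun i => by rw [map_smul]; rfl
  rw [Finset.sum_congr rfl fun i _ => h1 i, ← hφ r]
  rfl

/- ### The inverse matrix satisfies the reversed relations -/

lemma delta_rel (T S Γ Δ : Matrix (Fin n) (Fin n) F)
    (hc : ∀ r : Fin n, ∀ p ∈ UT n, cf T S Γ r p = 0)
    (hΔΓ : Δ * Γ = 1) (hΓΔ : Γ * Δ = 1) :
    ∀ k : Fin n, ∀ p ∈ UT n, cf S T Δ k p = 0 := by
  obtain ⟨φ, hφ⟩ := mk_hom T S Γ hc
  have hcomp := mk_comp_subst T S Γ φ hφ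
  have hcomp' : ∀ q : MvPolynomial (Fin n) F,
      Ideal.Quotient.mk (ntIdeal S) (subst Γ q)
        = φ (Ideal.Quotient.mk (ntIdeal T) q) := by
    intro q
    have := congrArg (fun ψ => ψ q) hcomp
    simpa [Ideal.Quotient.mkₐ_eq_mk] using this
  have hinj := subst_inj Γ Δ hΔΓ
  -- the span of the generators is mapped onto the span of the generators
  have hmapsto : ∀ r : Fin n, subst Γ (g T r) ∈ Submodule.span F (Set.range (g S)) := by
    intro r
    apply ideal_homog_mem_span S _ (subst_g_isHom Γ T r)
    rw [← Ideal.Quotient.eq_zero_iff_mem, hcomp', Ideal.Quotient.eq_zero_iff_mem.mpr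
      (g_mem_ideal T r), map_zero]
  have hspan : Submodule.map (subst Γ).toLinearMap (Submodule.span F (Set.range (g T)))
      = Submodule.span F (Set.range (g S)) := by
    have hle : Submodule.map (subst Γ).toLinearMap (Submodule.span F (Set.range (g T)))
        ≤ Submodule.span F (Set.range (g S)) := by
      rw [Submodule.map_span, Submodule.span_le]
      rintro _ ⟨_, ⟨r, rfl⟩, rfl⟩
      exact hmapsto r
    haveI : FiniteDimensional F (Submodule.span F (Set.range (g S))) :=
      FiniteDimensional.span_of_finite F (Set.finite_range _)
    have e1 := (Submodule.equivMapOfInjective (subst Γ).toLinearMap hinj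
      (Submodule.span F (Set.range (g T)))).finrank_eq
    have hVT : Module.finrank F (Submodule.span F (Set.range (g T))) = n := by
      rw [finrank_span_eq_card (g_linIndep T)]; simp
    have hVS : Module.finrank F (Submodule.span F (Set.range (g S))) = n := by
      rw [finrank_span_eq_card (g_linIndep S)]; simp
    exact Submodule.eq_of_le_of_finrank_le hle (by rw [hVS, ← e1, hVT])
  intro k
  set q : MvPolynomial (Fin n) F := ∑ p ∈ UT n, C (cf S T Δ k p) * (X p.1 * X p.2) with hq
  -- the image of `q` in `A(T)` is the defining relation expression for `Y k`
  have hu : Ideal.Quotient.mk (ntIdeal T) q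
      = (∑ r : Fin n, Δ r k • ntGen T r) ^ 2
        - ∑ i ∈ Finset.univ.filter (fun i => i < k),
            S k i • ((∑ r : Fin n, Δ r i • ntGen T r) * (∑ r : Fin n, Δ r k • ntGen T r)) := by
    rw [hq, ← sum_pairs_mk, ← key_calc T S Δ (ntGen T) (gen_rel T) k]
  have hφgen : ∀ i : Fin n, φ (∑ r : Fin n, Δ r i • ntGen T r) = ntGen S i := by
    intro i
    rw [map_sum]
    have h1 : ∀ r : Fin n, φ (Δ r i • ntGen T r)
        = Δ r i • ∑ b : Fin n, Γ b r • ntGen S b := fun r => by rw [map_smul, hφ r]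
    rw [Finset.sum_congr rfl fun r _ => h1 r, collapse (ntGen S) (fun r => Δ r i) Γ]
    have hent : ∀ b : Fin n, (∑ r : Fin n, Γ b r * Δ r i)
        = (1 : Matrix (Fin n) (Fin n) F) b i := by
      intro b; rw [← Matrix.mul_apply, hΓΔ]
    rw [Finset.sum_congr rfl fun b _ => by rw [hent b]]
    exact one_collapse (ntGen S) i
  have hφu : φ (Ideal.Quotient.mk (ntIdeal T) q) = 0 := by
    rw [hu, map_sub, map_pow, hφgen k, map_sum]
    have h1 : ∀ i : Fin n, φ (S k i • ((∑ r : Fin n, Δ r i • ntGen T r)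
        * (∑ r : Fin n, Δ r k • ntGen T r)))
        = S k i • (ntGen S i * ntGen S k) := by
      intro i
      rw [map_smul, map_mul, hφgen i, hφgen k]
    rw [Finset.sum_congr rfl fun i _ => h1 i]
    exact sub_eq_zero_of_eq (gen_rel S k)
  have hmem : subst Γ q ∈ ntIdeal S := by
    rw [← Ideal.Quotient.eq_zero_iff_mem, hcomp', hφu]
  have hVSmem : subst Γ q ∈ Submodule.span F (Set.range (g S)) :=
    ideal_homog_mem_span S hmem (hq ▸ subst_sq_isHom Γ (cf S T Δ k))
  rw [← hspan] at hVSmem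
  obtain ⟨w, hwVT, hw⟩ := hVSmem
  have hwq : w = q := hinj hw
  rw [hwq] at hwVT
  obtain ⟨l, hl⟩ := (Submodule.mem_span_range_iff_exists_fun F).mp hwVT
  exact rep_coeff T (cf S T Δ k) l (hq.trans hl.symm)


/- ### The two directions -/

lemma backward (T S Γ : Matrix (Fin n) (Fin n) F) (hu : IsUnit Γ)
    (hc : ∀ r : Fin n, ∀ p ∈ UT n, cf T S Γ r p = 0) :
    ∃ e : NTAlg T ≃ₐ[F] NTAlg S,
      ∀ r : Fin n, e (ntGen T r) = ∑ i : Fin n, Γ i r • ntGen S i := by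
  have hdet : IsUnit Γ.det := (Matrix.isUnit_iff_isUnit_det Γ).mp hu
  have hΔΓ : Γ⁻¹ * Γ = 1 := Matrix.nonsing_inv_mul Γ hdet
  have hΓΔ : Γ * Γ⁻¹ = 1 := Matrix.mul_nonsing_inv Γ hdet
  obtain ⟨φ, hφ⟩ := mk_hom T S Γ hc
  have hΔc := delta_rel T S Γ Γ⁻¹ hc hΔΓ hΓΔ
  obtain ⟨ψ, hψ⟩ := mk_hom S T Γ⁻¹ hΔc
  have hφψ : ∀ k : Fin n, φ (ψ (ntGen S k)) = ntGen S k := by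
    intro k
    rw [hψ k, map_sum]
    have h1 : ∀ r : Fin n, φ (Γ⁻¹ r k • ntGen T r)
        = Γ⁻¹ r k • ∑ b : Fin n, Γ b r • ntGen S b := fun r => by rw [map_smul, hφ r]
    rw [Finset.sum_congr rfl fun r _ => h1 r, collapse (ntGen S) (fun r => Γ⁻¹ r k) Γ]
    have hent : ∀ b : Fin n, (∑ r : Fin n, Γ b r * Γ⁻¹ r k)
        = (1 : Matrix (Fin n) (Fin n) F) b k := by
      intro b; rw [← Matrix.mul_apply, hΓΔ]
    rw [Finset.sum_congr rfl fun b _ => by rw [hent b]]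
    exact one_collapse (ntGen S) k
  have hψφ : ∀ k : Fin n, ψ (φ (ntGen T k)) = ntGen T k := by
    intro k
    rw [hφ k, map_sum]
    have h1 : ∀ r : Fin n, ψ (Γ r k • ntGen S r)
        = Γ r k • ∑ b : Fin n, Γ⁻¹ b r • ntGen T b := fun r => by rw [map_smul, hψ r]
    rw [Finset.sum_congr rfl fun r _ => h1 r, collapse (ntGen T) (fun r => Γ r k) Γ⁻¹]
    have hent : ∀ b : Fin n, (∑ r : Fin n, Γ⁻¹ b r * Γ r k)
        = (1 : Matrix (Fin n) (Fin n) F) b k := by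
      intro b; rw [← Matrix.mul_apply, hΔΓ]
    rw [Finset.sum_congr rfl fun b _ => by rw [hent b]]
    exact one_collapse (ntGen T) k
  have hc1 : φ.comp ψ = AlgHom.id F (NTAlg S) := by
    refine Ideal.Quotient.algHom_ext F (MvPolynomial.algHom_ext fun k => ?_)
    simp only [AlgHom.comp_apply, Ideal.Quotient.mkₐ_eq_mk, AlgHom.coe_id, id]
    exact hφψ k
  have hc2 : ψ.comp φ = AlgHom.id F (NTAlg T) := by
    refine Ideal.Quotient.algHom_ext F (MvPolynomial.algHom_ext fun k => ?_)
    simp only [AlgHom.comp_apply, Ideal.Quotient.mkₐ_eq_mk, AlgHom.coe_id, id]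
    exact hψφ k
  exact ⟨AlgEquiv.ofAlgHom φ ψ hc1 hc2, fun r => hφ r⟩

lemma forward_cf (T S Γ : Matrix (Fin n) (Fin n) F) (e : NTAlg T ≃ₐ[F] NTAlg S)
    (he : ∀ r : Fin n, e (ntGen T r) = ∑ i : Fin n, Γ i r • ntGen S i) (r : Fin n) :
    ∀ p ∈ UT n, cf T S Γ r p = 0 := by
  have h0 : (ntGen T r) ^ 2 - ∑ j ∈ Finset.univ.filter (fun j => j < r),
      T r j • (ntGen T j * ntGen T r) = 0 := sub_eq_zero_of_eq (gen_rel T r)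
  have h1 := congrArg e h0
  rw [map_zero, map_sub, map_pow, map_sum] at h1
  have hterm : ∀ j : Fin n, e (T r j • (ntGen T j * ntGen T r))
      = T r j • ((∑ i : Fin n, Γ i j • ntGen S i) * (∑ i : Fin n, Γ i r • ntGen S i)) := by
    intro j
    rw [map_smul, map_mul, he j, he r]
  rw [Finset.sum_congr rfl fun j _ => hterm j, he r,
    key_calc S T Γ (ntGen S) (gen_rel S) r, sum_pairs_mk] at h1
  exact sqfree_indep S (cf T S Γ r) (Ideal.Quotient.eq_zero_iff_mem.mp h1)

lemma forward_unit (T S Γ : Matrix (Fin n) (Fin n) F) (e : NTAlg T ≃ₐ[F] NTAlg S)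
    (he : ∀ r : Fin n, e (ntGen T r) = ∑ i : Fin n, Γ i r • ntGen S i) :
    IsUnit Γ := by
  have hinj : ∀ v : Fin n → F, Γ.mulVec v = 0 → v = 0 := by
    intro v hv
    have h1 : e (∑ r : Fin n, v r • ntGen T r) = 0 := by
      rw [map_sum]
      have hterm : ∀ r : Fin n, e (v r • ntGen T r)
          = v r • ∑ i : Fin n, Γ i r • ntGen S i := fun r => by rw [map_smul, he r]
      rw [Finset.sum_congr rfl fun r _ => hterm r, collapse (ntGen S) v Γ]
      have hent : ∀ i : Fin n, (∑ r : Fin n, Γ i r * v r) = 0 := by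
        intro i
        have := congrFun hv i
        rwa [Matrix.mulVec, dotProduct] at this
      exact Finset.sum_eq_zero fun i _ => by rw [hent i, zero_smul]
    have h2 : (∑ r : Fin n, v r • ntGen T r) = 0 := by
      apply e.injective
      rw [h1, map_zero]
    have h3 : (∑ r : Fin n, C (v r) * X r) ∈ ntIdeal T := by
      rw [← Ideal.Quotient.eq_zero_iff_mem, map_sum,
        Finset.sum_congr rfl fun r _ => mk_C_mul (v r) (X r)]
      exact h2
    funext r
    exact lin_indep T v h3 r
  have hdet : Γ.det ≠ 0 := by
    intro hdet0
    obtain ⟨v, hv0, hv⟩ := Matrix.exists_mulVec_eq_zero_iff.mpr hdet0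
    exact hv0 (hinj v hv)
  exact (Matrix.isUnit_iff_isUnit_det Γ).mpr (isUnit_iff_ne_zero.mpr hdet)

end Stmt3Aux

/-- The assignment `X j ↦ ∑ i, Γ i j • Y i` defines an isomorphism `A(T) → A(S)` iff
`Γ` is invertible and its entries satisfy the fundamental quadratic equations. -/
theorem stmt3 {n : ℕ} (h2 : (2 : F) ≠ 0)
    (T S : Matrix (Fin n) (Fin n) F) (hT : SLT T) (hS : SLT S)
    (Γ : Matrix (Fin n) (Fin n) F) :
    (∃ e : NTAlg T ≃ₐ[F] NTAlg S,
      ∀ r : Fin n, e (ntGen T r) = ∑ i : Fin n, Γ i r • ntGen S i) ↔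
    (IsUnit Γ ∧
      ∀ (r : Fin n) (i k : Fin n), i < k →
        2 * Γ i r * Γ k r + Γ k r ^ 2 * S k i =
          ∑ j ∈ Finset.univ.filter (fun j => j < r),
            T r j * (Γ k j * Γ k r * S k i + Γ k j * Γ i r + Γ i j * Γ k r)) := by
  classical
  constructor
  · rintro ⟨e, he⟩
    refine ⟨Stmt3Aux.forward_unit T S Γ e he, fun r i k hik => ?_⟩
    have h0 := Stmt3Aux.forward_cf T S Γ e he r (i, k)
      (by simp [Stmt3Aux.UT, hik])
    rw [Stmt3Aux.cf] at h0
    have := sub_eq_zero.mp h0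
    simpa using this
  · rintro ⟨hu, heq⟩
    apply Stmt3Aux.backward T S Γ hu
    intro r p hp
    have hp' : p.1 < p.2 := by simpa [Stmt3Aux.UT] using hp
    rw [Stmt3Aux.cf, sub_eq_zero]
    simpa using heq r p.1 p.2 hp'
end
end

section
/- Let F be a field of characteristic ≠ 2, T = [t_{rk}] a strictly lower triangular n×n matrix over F, 1 ≤ r₁ ≤ n and α ∈ F, α ≠ 0. Define S = [s_{rk}] by s_{rk} = t_{rk}/α if r = r₁, s_{rk} = α t_{rk} if k = r₁, and s_{rk} = t_{rk} otherwise. Then A(T) ≅ A(S) as F-algebras, via an isomorphism sending X_{r₁} ↦ α Y_{r₁} and X_r ↦ Y_r for r ≠ r₁. -/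
open scoped BigOperators

noncomputable section

variable {F : Type} [Field F]

def scaleHom {n : ℕ} (T S : Matrix (Fin n) (Fin n) F) (c : Fin n → F)
    (hc : ∀ i j : Fin n, j < i → c i ^ 2 * S i j = T i j * c j * c i) :
    NTAlg T →ₐ[F] NTAlg S := by
  refine Ideal.Quotient.liftₐ (ntIdeal T)
    ((Ideal.Quotient.mkₐ F (ntIdeal S)).comp
      (MvPolynomial.aeval (fun i => MvPolynomial.C (c i) * MvPolynomial.X i))) ?_
  intro a ha
  rw [← RingHom.mem_ker]
  revert a ha
  rw [← SetLike.le_def]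
  show ntIdeal T ≤ _
  rw [ntIdeal, Ideal.span_le]
  rintro p ⟨i, rfl⟩
  simp only [SetLike.mem_coe, RingHom.mem_ker, AlgHom.coe_comp, Function.comp_apply]
  have haev : (MvPolynomial.aeval (fun i => MvPolynomial.C (c i) * MvPolynomial.X i) :
        MvPolynomial (Fin n) F →ₐ[F] MvPolynomial (Fin n) F)
      (MvPolynomial.X i ^ 2 -
        ∑ j ∈ Finset.univ.filter (fun j => j < i),
          MvPolynomial.C (T i j) * MvPolynomial.X j * MvPolynomial.X i)
      = MvPolynomial.C (c i ^ 2) *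
        (MvPolynomial.X i ^ 2 - ∑ j ∈ Finset.univ.filter (fun j => j < i),
          MvPolynomial.C (S i j) * MvPolynomial.X j * MvPolynomial.X i) := by
    simp only [map_sub, map_pow, map_sum, map_mul, MvPolynomial.aeval_X, MvPolynomial.aeval_C,
      MvPolynomial.algebraMap_eq]
    rw [mul_sub, Finset.mul_sum]
    refine congrArg₂ (· - ·) ?_ ?_
    · rw [mul_pow]
    · apply Finset.sum_congr rfl
      intro j hj
      rw [Finset.mem_filter] at hj
      have hC := congrArg (MvPolynomial.C (σ := Fin n)) (hc i j hj.2)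
      rw [map_mul, map_mul, map_mul, map_pow] at hC
      linear_combination (-(MvPolynomial.X j * MvPolynomial.X i)) * hC
  rw [haev]
  rw [map_mul]
  have : Ideal.Quotient.mkₐ F (ntIdeal S)
      (MvPolynomial.X i ^ 2 - ∑ j ∈ Finset.univ.filter (fun j => j < i),
        MvPolynomial.C (S i j) * MvPolynomial.X j * MvPolynomial.X i) = 0 := by
    rw [Ideal.Quotient.mkₐ_eq_mk, Ideal.Quotient.eq_zero_iff_mem]
    exact Ideal.subset_span ⟨i, rfl⟩
  rw [this, mul_zero]

lemma scaleHom_gen {n : ℕ} (T S : Matrix (Fin n) (Fin n) F) (c : Fin n → F)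
    (hc : ∀ i j : Fin n, j < i → c i ^ 2 * S i j = T i j * c j * c i) (i : Fin n) :
    scaleHom T S c hc (ntGen T i) = c i • ntGen S i := by
  unfold scaleHom ntGen
  rw [Ideal.Quotient.liftₐ_apply]
  change ((Ideal.Quotient.mkₐ F (ntIdeal S)).comp
    (MvPolynomial.aeval fun i => MvPolynomial.C (c i) * MvPolynomial.X i)) (MvPolynomial.X i) = _
  simp only [RingHom.coe_coe, AlgHom.coe_comp, Function.comp_apply, MvPolynomial.aeval_X, map_mul,
    Ideal.Quotient.mkₐ_eq_mk, Algebra.smul_def]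
  rw [← Ideal.Quotient.mkₐ_eq_mk F, ← map_smul, MvPolynomial.smul_eq_C_mul,
    Ideal.Quotient.mkₐ_eq_mk, map_mul]

/-- The elementary triangular operation `P_{r₁}(T, α)` yields an isomorphic algebra,
via `X_{r₁} ↦ α Y_{r₁}`, `X_r ↦ Y_r` for `r ≠ r₁`. -/
theorem stmt4 {n : ℕ} (h2 : (2 : F) ≠ 0) (T : Matrix (Fin n) (Fin n) F) (hT : SLT T)
    (r₁ : Fin n) (α : F) (hα : α ≠ 0) (S : Matrix (Fin n) (Fin n) F)
    (hS : ∀ r k : Fin n, S r k =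
      if r = r₁ then T r k / α else if k = r₁ then α * T r k else T r k) :
    ∃ e : NTAlg T ≃ₐ[F] NTAlg S,
      e (ntGen T r₁) = α • ntGen S r₁ ∧
      ∀ r : Fin n, r ≠ r₁ → e (ntGen T r) = ntGen S r := by
  set c : Fin n → F := fun i => if i = r₁ then α else 1 with hcdef
  set c' : Fin n → F := fun i => if i = r₁ then α⁻¹ else 1 with hc'def
  have hcc' : ∀ i, c i * c' i = 1 := by
    intro i
    simp only [hcdef, hc'def]
    split
    · exact mul_inv_cancel₀ hα
    · exact one_mul 1
  have hc : ∀ i j : Fin n, j < i → c i ^ 2 * S i j = T i j * c j * c i := by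
    intro i j hij
    by_cases hi : i = r₁
    · have hj : j ≠ r₁ := by rintro rfl; exact absurd (hi ▸ hij) (lt_irrefl _)
      rw [hS, hcdef]
      simp only [if_pos hi, if_neg hj]
      field_simp
    · by_cases hj : j = r₁
      · rw [hS, hcdef]
        simp only [if_neg hi, if_pos hj]
        ring
      · rw [hS, hcdef]
        simp only [if_neg hi, if_neg hj]
        ring
  have hc' : ∀ i j : Fin n, j < i → c' i ^ 2 * T i j = S i j * c' j * c' i := by
    intro i j hij
    by_cases hi : i = r₁
    · have hj : j ≠ r₁ := by rintro rfl; exact absurd (hi ▸ hij) (lt_irrefl _)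
      rw [hS, hc'def]
      simp only [if_pos hi, if_neg hj]
      rw [div_eq_mul_inv]
      ring
    · by_cases hj : j = r₁
      · rw [hS, hc'def]
        simp only [if_neg hi, if_pos hj]
        field_simp
      · rw [hS, hc'def]
        simp only [if_neg hi, if_neg hj]
        ring
  have comp1 : (scaleHom T S c hc).comp (scaleHom S T c' hc') = AlgHom.id F (NTAlg S) := by
    apply Ideal.Quotient.algHom_ext
    apply MvPolynomial.algHom_ext
    intro i
    show (scaleHom T S c hc) ((scaleHom S T c' hc') (ntGen S i)) = ntGen S i
    rw [scaleHom_gen, map_smul, scaleHom_gen, smul_smul, mul_comm, hcc', one_smul]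
  have comp2 : (scaleHom S T c' hc').comp (scaleHom T S c hc) = AlgHom.id F (NTAlg T) := by
    apply Ideal.Quotient.algHom_ext
    apply MvPolynomial.algHom_ext
    intro i
    show (scaleHom S T c' hc') ((scaleHom T S c hc) (ntGen T i)) = ntGen T i
    rw [scaleHom_gen, map_smul, scaleHom_gen, smul_smul, hcc', one_smul]
  refine ⟨AlgEquiv.ofAlgHom (scaleHom T S c hc) (scaleHom S T c' hc') comp1 comp2, ?_, ?_⟩
  · show scaleHom T S c hc (ntGen T r₁) = α • ntGen S r₁
    rw [scaleHom_gen]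
    simp [hcdef]
  · intro r hr
    show scaleHom T S c hc (ntGen T r) = ntGen S r
    rw [scaleHom_gen]
    simp [hcdef, hr]
end
end

section
/- Let F be a field of characteristic ≠ 2 and T = [t_{rk}] a strictly lower triangular n×n matrix over F. Fix 1 ≤ r₁ < r₂ ≤ n and suppose t_{r₂ j} = 0 for all j ≥ r₁ and t_{r r₁} = 0 for all r₁ < r < r₂. Let S be the matrix obtained from T by exchanging rows r₁ and r₂ and exchanging columns r₁ and r₂. Then A(T) ≅ A(S) as F-algebras, via the isomorphism swapping X_{r₁} ↔ Y_{r₂} and X_{r₂} ↔ Y_{r₁} and fixing the other generators. -/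
open scoped BigOperators

noncomputable section

variable {F : Type} [Field F]

lemma swap_sum_aux {n : ℕ} (σ : Equiv.Perm (Fin n)) (hσ : ∀ a, σ (σ a) = a)
    (i : Fin n) (c : Fin n → F)
    (hc : ∀ j, ((j < i) ↔ (σ j < σ i)) ∨ c j = 0) :
    ∑ j ∈ Finset.univ.filter (fun j => j < i),
        (MvPolynomial.C (c j) * MvPolynomial.X (σ j) * MvPolynomial.X (σ i) :
          MvPolynomial (Fin n) F)
      = ∑ k ∈ Finset.univ.filter (fun k => k < σ i),
        MvPolynomial.C (c (σ k)) * MvPolynomial.X k * MvPolynomial.X (σ i) := by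
  rw [Finset.sum_filter, Finset.sum_filter]
  refine Fintype.sum_equiv σ _ _ ?_
  intro j
  rcases hc j with h | h
  · by_cases hj : j < i
    · rw [if_pos hj, if_pos (h.mp hj), hσ]
    · rw [if_neg hj, if_neg (fun hh => hj (h.mpr hh))]
  · by_cases hj : j < i
    · by_cases hj' : σ j < σ i
      · rw [if_pos hj, if_pos hj', hσ, h]
      · rw [if_pos hj, if_neg hj', h]; simp
    · by_cases hj' : σ j < σ i
      · rw [if_neg hj, if_pos hj', hσ, h]; simp
      · rw [if_neg hj, if_neg hj']

/-- The elementary triangular operation `F_{(r₁,r₂)}(T)` (swap rows and columns `r₁, r₂`,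
under the stated restrictions) yields an isomorphic algebra, via the swap of generators. -/
theorem stmt5 {n : ℕ} (h2 : (2 : F) ≠ 0) (T : Matrix (Fin n) (Fin n) F) (hT : SLT T)
    (r₁ r₂ : Fin n) (h12 : r₁ < r₂)
    (hrow : ∀ j : Fin n, r₁ ≤ j → T r₂ j = 0)
    (hcol : ∀ r : Fin n, r₁ < r → r < r₂ → T r r₁ = 0)
    (S : Matrix (Fin n) (Fin n) F)
    (hS : ∀ r k : Fin n, S r k = T (Equiv.swap r₁ r₂ r) (Equiv.swap r₁ r₂ k)) :
    ∃ e : NTAlg T ≃ₐ[F] NTAlg S,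
      e (ntGen T r₁) = ntGen S r₂ ∧ e (ntGen T r₂) = ntGen S r₁ ∧
      ∀ r : Fin n, r ≠ r₁ → r ≠ r₂ → e (ntGen T r) = ntGen S r := by
  set σ : Equiv.Perm (Fin n) := Equiv.swap r₁ r₂ with hσdef
  have hσσ : ∀ a, σ (σ a) = a := fun a => Equiv.swap_apply_self r₁ r₂ a
  have hs1 : σ r₁ = r₂ := Equiv.swap_apply_left r₁ r₂
  have hs2 : σ r₂ = r₁ := Equiv.swap_apply_right r₁ r₂
  have hso : ∀ b : Fin n, b ≠ r₁ → b ≠ r₂ → σ b = b :=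
    fun b h1 h2 => Equiv.swap_apply_of_ne_of_ne h1 h2
  -- key combinatorial lemma
  have hkey : ∀ a b : Fin n, ((b < a) ↔ (σ b < σ a)) ∨ T a b = 0 := by
    intro a b
    by_cases hba : b < a
    · by_cases hs : σ b < σ a
      · exact Or.inl ⟨fun _ => hs, fun _ => hba⟩
      · right
        by_cases ha2 : a = r₂
        · rw [ha2]
          refine hrow b ?_
          by_cases hb1 : b = r₁
          · exact le_of_eq hb1.symm
          · have hb2 : b ≠ r₂ := by rw [← ha2]; exact ne_of_lt hba
            refine le_of_not_gt (fun hh => hs ?_)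
            rw [hso b hb1 hb2, ha2, hs2]; exact hh
        · by_cases ha1 : a = r₁
          · exfalso
            have hba' : b < r₁ := by rw [← ha1]; exact hba
            have hb1 : b ≠ r₁ := ne_of_lt hba'
            have hb2 : b ≠ r₂ := ne_of_lt (hba'.trans h12)
            exact hs (by rw [hso b hb1 hb2, ha1, hs1]; exact hba'.trans h12)
          · have hsa : σ a = a := hso a ha1 ha2
            by_cases hb1 : b = r₁
            · have hba' : r₁ < a := by rw [← hb1]; exact hba
              rw [hb1]
              refine hcol a hba' (lt_of_le_of_ne (le_of_not_gt (fun hh => hs ?_)) ha2)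
              rw [hb1, hs1, hsa]; exact hh
            · by_cases hb2 : b = r₂
              · exfalso
                have hba' : r₂ < a := by rw [← hb2]; exact hba
                exact hs (by rw [hb2, hs2, hsa]; exact h12.trans hba')
              · exfalso
                exact hs (by rw [hso b hb1 hb2, hsa]; exact hba)
    · by_cases hs : σ b < σ a
      · exact Or.inr (hT a b (le_of_not_gt hba))
      · exact Or.inl ⟨fun h => absurd h hba, fun h => absurd h hs⟩
  -- the relation of T at i maps to the relation of S at σ i, and vice versa
  have rel1 : ∀ i : Fin n,
      MvPolynomial.rename σ (MvPolynomial.X i ^ 2 -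
        ∑ j ∈ Finset.univ.filter (fun j => j < i),
          MvPolynomial.C (T i j) * MvPolynomial.X j * MvPolynomial.X i)
      = (MvPolynomial.X (σ i) ^ 2 -
        ∑ k ∈ Finset.univ.filter (fun k => k < σ i),
          MvPolynomial.C (S (σ i) k) * MvPolynomial.X k * MvPolynomial.X (σ i) :
            MvPolynomial (Fin n) F) := by
    intro i
    have hSe : ∀ k, S (σ i) k = T i (σ k) := by
      intro k; rw [hS, hσσ]
    simp only [map_sub, map_pow, map_sum, map_mul, MvPolynomial.rename_X,
      MvPolynomial.rename_C]
    congr 1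
    rw [swap_sum_aux σ hσσ i (fun j => T i j) (fun j => hkey i j)]
    exact Finset.sum_congr rfl (fun k _ => by rw [hSe])
  have rel2 : ∀ i : Fin n,
      MvPolynomial.rename σ (MvPolynomial.X i ^ 2 -
        ∑ j ∈ Finset.univ.filter (fun j => j < i),
          MvPolynomial.C (S i j) * MvPolynomial.X j * MvPolynomial.X i)
      = (MvPolynomial.X (σ i) ^ 2 -
        ∑ k ∈ Finset.univ.filter (fun k => k < σ i),
          MvPolynomial.C (T (σ i) k) * MvPolynomial.X k * MvPolynomial.X (σ i) :
            MvPolynomial (Fin n) F) := by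
    intro i
    simp only [map_sub, map_pow, map_sum, map_mul, MvPolynomial.rename_X,
      MvPolynomial.rename_C]
    congr 1
    have hc : ∀ j, ((j < i) ↔ (σ j < σ i)) ∨ S i j = 0 := by
      intro j
      rcases hkey (σ i) (σ j) with h | h
      · left
        constructor
        · intro hh; exact h.mpr (by rwa [hσσ, hσσ])
        · intro hh; have := h.mp hh; rwa [hσσ, hσσ] at this
      · right; rw [hS]; exact h
    rw [swap_sum_aux σ hσσ i (fun j => S i j) hc]
    refine Finset.sum_congr rfl (fun k _ => ?_)
    rw [hS, hσσ]
  -- algebra homs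
  have hf' : ntIdeal T ≤ Ideal.comap (MvPolynomial.rename (R := F) σ).toRingHom (ntIdeal S) := by
    rw [ntIdeal, Ideal.span_le]
    rintro p ⟨i, rfl⟩
    simp only [SetLike.mem_coe, Ideal.mem_comap, AlgHom.toRingHom_eq_coe, RingHom.coe_coe]
    rw [rel1 i]
    exact Ideal.subset_span ⟨σ i, rfl⟩
  have hg' : ntIdeal S ≤ Ideal.comap (MvPolynomial.rename (R := F) σ).toRingHom (ntIdeal T) := by
    rw [ntIdeal, Ideal.span_le]
    rintro p ⟨i, rfl⟩
    simp only [SetLike.mem_coe, Ideal.mem_comap, AlgHom.toRingHom_eq_coe, RingHom.coe_coe]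
    rw [rel2 i]
    exact Ideal.subset_span ⟨σ i, rfl⟩
  have hf : ∀ p ∈ ntIdeal T,
      (Ideal.Quotient.mkₐ F (ntIdeal S)).comp (MvPolynomial.rename σ) p = 0 := by
    intro p hp
    simp only [AlgHom.coe_comp, Function.comp_apply, Ideal.Quotient.mkₐ_eq_mk]
    rw [Ideal.Quotient.eq_zero_iff_mem]
    have := hf' hp
    rwa [Ideal.mem_comap] at this
  have hg : ∀ p ∈ ntIdeal S,
      (Ideal.Quotient.mkₐ F (ntIdeal T)).comp (MvPolynomial.rename σ) p = 0 := by
    intro p hp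
    simp only [AlgHom.coe_comp, Function.comp_apply, Ideal.Quotient.mkₐ_eq_mk]
    rw [Ideal.Quotient.eq_zero_iff_mem]
    have := hg' hp
    rwa [Ideal.mem_comap] at this
  let φ : NTAlg T →ₐ[F] NTAlg S :=
    Ideal.Quotient.liftₐ (ntIdeal T)
      ((Ideal.Quotient.mkₐ F (ntIdeal S)).comp (MvPolynomial.rename σ)) hf
  let ψ : NTAlg S →ₐ[F] NTAlg T :=
    Ideal.Quotient.liftₐ (ntIdeal S)
      ((Ideal.Quotient.mkₐ F (ntIdeal T)).comp (MvPolynomial.rename σ)) hg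
  have hφ : ∀ p, φ (Ideal.Quotient.mk (ntIdeal T) p)
      = Ideal.Quotient.mk (ntIdeal S) (MvPolynomial.rename σ p) := by
    intro p
    simp [φ, Ideal.Quotient.liftₐ_apply]
    rfl
  have hψ : ∀ p, ψ (Ideal.Quotient.mk (ntIdeal S) p)
      = Ideal.Quotient.mk (ntIdeal T) (MvPolynomial.rename σ p) := by
    intro p
    simp [ψ, Ideal.Quotient.liftₐ_apply]
    rfl
  have h1 : φ.comp ψ = AlgHom.id F (NTAlg S) := by
    apply Ideal.Quotient.algHom_ext
    apply MvPolynomial.algHom_ext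
    intro i
    simp only [AlgHom.coe_comp, Function.comp_apply, Ideal.Quotient.mkₐ_eq_mk,
      AlgHom.coe_id, id_eq]
    rw [hψ, MvPolynomial.rename_X, hφ, MvPolynomial.rename_X, hσσ]
  have h2' : ψ.comp φ = AlgHom.id F (NTAlg T) := by
    apply Ideal.Quotient.algHom_ext
    apply MvPolynomial.algHom_ext
    intro i
    simp only [AlgHom.coe_comp, Function.comp_apply, Ideal.Quotient.mkₐ_eq_mk,
      AlgHom.coe_id, id_eq]
    rw [hφ, MvPolynomial.rename_X, hψ, MvPolynomial.rename_X, hσσ]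
  refine ⟨AlgEquiv.ofAlgHom φ ψ h1 h2', ?_, ?_, ?_⟩
  · show φ (ntGen T r₁) = ntGen S r₂
    rw [ntGen, hφ, MvPolynomial.rename_X, hs1, ntGen]
  · show φ (ntGen T r₂) = ntGen S r₁
    rw [ntGen, hφ, MvPolynomial.rename_X, hs2, ntGen]
  · intro r hr1 hr2
    show φ (ntGen T r) = ntGen S r
    rw [ntGen, hφ, MvPolynomial.rename_X, hso r hr1 hr2, ntGen]
end
end

section
/- Let F be a field of characteristic ≠ 2, T = [t_{rk}] a strictly lower triangular n×n matrix over F, β ∈ F, and 1 ≤ k₀ < r₀ ≤ n with t_{r₀ j} = 0 for all j > k₀. Assume either k₀ = 1, or k₀ > 1 and t_{r₀ i} + t_{r₀ k₀} t_{k₀ i} = β t_{k₀ i} for all 1 ≤ i < k₀. Define S = [s_{rk}] by s_{r₀ k₀} = t_{r₀ k₀} − 2β, s_{r k₀} = t_{r k₀} + β t_{r r₀} for r > r₀, and s_{rk} = t_{rk} otherwise. Then A(T) ≅ A(S), via the map X_{r₀} ↦ β Y_{k₀} + Y_{r₀}, X_r ↦ Y_r for r ≠ r₀. -/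
open scoped BigOperators

set_option maxHeartbeats 1600000
set_option synthInstance.maxHeartbeats 200000

noncomputable section

variable {F : Type} [Field F]

namespace Stmt6Aux

/-- The defining relation of `A(S)`. -/
lemma ntRel {n : ℕ} (S : Matrix (Fin n) (Fin n) F) (i : Fin n) :
    (ntGen S i) ^ 2 = ∑ j ∈ Finset.univ.filter (fun j => j < i),
      algebraMap F (NTAlg S) (S i j) * (ntGen S j * ntGen S i) := by
  have hmem : (MvPolynomial.X i ^ 2 -
      ∑ j ∈ Finset.univ.filter (fun j => j < i),
        MvPolynomial.C (S i j) * MvPolynomial.X j * MvPolynomial.X i) ∈ ntIdeal S :=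
    Ideal.subset_span ⟨i, rfl⟩
  have h0 := Ideal.Quotient.eq_zero_iff_mem.mpr hmem
  rw [map_sub, map_pow, map_sum, sub_eq_zero] at h0
  rw [ntGen, h0]
  refine Finset.sum_congr rfl fun j _ => ?_
  rw [map_mul, map_mul, ← MvPolynomial.algebraMap_eq, Ideal.Quotient.mk_algebraMap, mul_assoc]
  rfl

lemma sum_split {n : ℕ} {A : Type} [AddCommMonoid A] (k₀ r₀ : Fin n) (hk : k₀ < r₀)
    (f : Fin n → A) (hf : ∀ j, k₀ < j → j < r₀ → f j = 0) :
    ∑ j ∈ Finset.univ.filter (fun j => j < r₀), f j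
      = f k₀ + ∑ j ∈ Finset.univ.filter (fun j => j < k₀), f j := by
  have h1 : insert k₀ (Finset.univ.filter (fun j : Fin n => j < k₀)) ⊆
      Finset.univ.filter (fun j => j < r₀) := by
    intro j hj
    simp only [Finset.mem_insert, Finset.mem_filter, Finset.mem_univ, true_and] at hj ⊢
    rcases hj with rfl | hj
    · exact hk
    · exact hj.trans hk
  have h2 : ∀ x ∈ Finset.univ.filter (fun j : Fin n => j < r₀),
      x ∉ insert k₀ (Finset.univ.filter (fun j : Fin n => j < k₀)) → f x = 0 := by
    intro x hx hx'
    simp only [Finset.mem_filter, Finset.mem_univ, true_and] at hx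
    simp only [Finset.mem_insert, Finset.mem_filter, Finset.mem_univ, true_and, not_or] at hx'
    exact hf x (lt_of_le_of_ne (le_of_not_gt hx'.2) (Ne.symm hx'.1)) hx
  rw [← Finset.sum_subset h1 h2, Finset.sum_insert (by simp)]

lemma mainHom {n : ℕ} (T : Matrix (Fin n) (Fin n) F)
    (k₀ r₀ : Fin n) (hk : k₀ < r₀) (β : F)
    (hzero : ∀ j : Fin n, k₀ < j → T r₀ j = 0)
    (hcond : ∀ i : Fin n, i < k₀ → T r₀ i + T r₀ k₀ * T k₀ i = β * T k₀ i)
    (S : Matrix (Fin n) (Fin n) F)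
    (hS : ∀ r k : Fin n, S r k =
      if r = r₀ ∧ k = k₀ then T r₀ k₀ - 2 * β
      else if r₀ < r ∧ k = k₀ then T r k₀ + β * T r r₀
      else T r k) :
    ∃ f : NTAlg T →ₐ[F] NTAlg S, ∀ p : MvPolynomial (Fin n) F,
      f (Ideal.Quotient.mk (ntIdeal T) p) = MvPolynomial.aeval
        (fun r => ntGen S r +
          if r = r₀ then algebraMap F (NTAlg S) β * ntGen S k₀ else 0) p := by
  set b : NTAlg S := algebraMap F (NTAlg S) β with hb
  set v : Fin n → NTAlg S := fun r => ntGen S r + if r = r₀ then b * ntGen S k₀ else 0 with hv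
  have hgen : ∀ i : Fin n, (v i) ^ 2 = ∑ j ∈ Finset.univ.filter (fun j => j < i),
      algebraMap F (NTAlg S) (T i j) * v j * v i := by
    intro i
    by_cases hi : i = r₀
    · rw [hi]
      have hvr : v r₀ = ntGen S r₀ + b * ntGen S k₀ := by simp [hv]
      have e1 : ∑ j ∈ Finset.univ.filter (fun j => j < r₀),
          algebraMap F (NTAlg S) (T r₀ j) * v j * v r₀
          = ∑ j ∈ Finset.univ.filter (fun j => j < r₀),
            algebraMap F (NTAlg S) (T r₀ j) * ntGen S j * (ntGen S r₀ + b * ntGen S k₀) := by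
        refine Finset.sum_congr rfl fun j hj => ?_
        have hj' : j < r₀ := by simpa using hj
        rw [hvr, show v j = ntGen S j by simp [hv, hj'.ne]]
      rw [e1, hvr]
      rw [sum_split k₀ r₀ hk _ (fun j h1 _ => by rw [hzero j h1, map_zero, zero_mul, zero_mul])]
      -- relation for k₀ in S
      have hK : (ntGen S k₀) ^ 2 = ∑ j ∈ Finset.univ.filter (fun j => j < k₀),
          algebraMap F (NTAlg S) (T k₀ j) * (ntGen S j * ntGen S k₀) := by
        rw [ntRel S k₀]
        refine Finset.sum_congr rfl fun j hj => ?_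
        rw [hS k₀ j, if_neg (by rintro ⟨h1, -⟩; exact hk.ne h1),
          if_neg (by rintro ⟨h1, -⟩; exact lt_asymm hk h1)]
      -- relation for r₀ in S
      have hR : (ntGen S r₀) ^ 2 =
          (algebraMap F (NTAlg S) (T r₀ k₀) - 2 * b) * (ntGen S k₀ * ntGen S r₀)
          + ∑ j ∈ Finset.univ.filter (fun j => j < k₀),
            algebraMap F (NTAlg S) (T r₀ j) * (ntGen S j * ntGen S r₀) := by
        rw [ntRel S r₀]
        rw [sum_split k₀ r₀ hk _ (fun j h1 h2 => by
          rw [hS r₀ j, if_neg (by rintro ⟨-, h⟩; exact h1.ne' h),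
            if_neg (by rintro ⟨h, -⟩; exact lt_irrefl _ h), hzero j h1, map_zero, zero_mul])]
        congr 1
        · rw [hS r₀ k₀, if_pos ⟨rfl, rfl⟩, map_sub, map_mul, map_ofNat, hb]
        · refine Finset.sum_congr rfl fun j hj => ?_
          have hj' : j < k₀ := by simpa using hj
          rw [hS r₀ j, if_neg (by rintro ⟨-, h⟩; exact hj'.ne h),
            if_neg (by rintro ⟨h, -⟩; exact lt_irrefl _ h)]
      -- the key cancellation
      have hsum : (∑ j ∈ Finset.univ.filter (fun j => j < k₀),
            algebraMap F (NTAlg S) (T r₀ j) * (ntGen S j * ntGen S k₀))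
          + algebraMap F (NTAlg S) (T r₀ k₀) *
            (∑ j ∈ Finset.univ.filter (fun j => j < k₀),
              algebraMap F (NTAlg S) (T k₀ j) * (ntGen S j * ntGen S k₀))
          = b * ∑ j ∈ Finset.univ.filter (fun j => j < k₀),
              algebraMap F (NTAlg S) (T k₀ j) * (ntGen S j * ntGen S k₀) := by
        rw [Finset.mul_sum, Finset.mul_sum, ← Finset.sum_add_distrib]
        refine Finset.sum_congr rfl fun j hj => ?_
        have hj' : j < k₀ := by simpa using hj
        have h := congrArg (algebraMap F (NTAlg S)) (hcond j hj')
        rw [map_add, map_mul, map_mul] at h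
        rw [hb]
        linear_combination h * (ntGen S j * ntGen S k₀)
      have esplit : ∑ j ∈ Finset.univ.filter (fun j => j < k₀),
          algebraMap F (NTAlg S) (T r₀ j) * ntGen S j * (ntGen S r₀ + b * ntGen S k₀)
          = (∑ j ∈ Finset.univ.filter (fun j => j < k₀),
              algebraMap F (NTAlg S) (T r₀ j) * (ntGen S j * ntGen S r₀))
            + b * ∑ j ∈ Finset.univ.filter (fun j => j < k₀),
              algebraMap F (NTAlg S) (T r₀ j) * (ntGen S j * ntGen S k₀) := by
        rw [Finset.mul_sum, ← Finset.sum_add_distrib]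
        exact Finset.sum_congr rfl fun j _ => by ring
      rw [esplit]
      linear_combination hR + (b ^ 2 - algebraMap F (NTAlg S) (T r₀ k₀) * b) * hK - b * hsum
    · have hvi : v i = ntGen S i := by simp [hv, hi]
      by_cases hlt : r₀ < i
      · have hmem : r₀ ∈ Finset.univ.filter (fun j : Fin n => j < i) := by simpa using hlt
        have e1 : ∑ j ∈ Finset.univ.filter (fun j => j < i),
            algebraMap F (NTAlg S) (T i j) * v j * v i
            = ∑ j ∈ Finset.univ.filter (fun j => j < i),
              (algebraMap F (NTAlg S) (T i j) * ntGen S j * ntGen S i +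
                if j = r₀ then algebraMap F (NTAlg S) (T i r₀) * (b * ntGen S k₀) * ntGen S i
                else 0) := by
          refine Finset.sum_congr rfl fun j hj => ?_
          by_cases hj' : j = r₀
          · rw [if_pos hj', hj', hvi, show v r₀ = ntGen S r₀ + b * ntGen S k₀ by simp [hv]]
            ring
          · rw [if_neg hj', add_zero, hvi, show v j = ntGen S j by simp [hv, hj']]
        rw [e1, Finset.sum_add_distrib, Finset.sum_ite_eq' _ r₀ _, if_pos hmem, hvi]
        have hmem' : k₀ ∈ Finset.univ.filter (fun j : Fin n => j < i) := by
          simpa using hk.trans hlt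
        have e2 : ∑ j ∈ Finset.univ.filter (fun j => j < i),
            algebraMap F (NTAlg S) (S i j) * (ntGen S j * ntGen S i)
            = ∑ j ∈ Finset.univ.filter (fun j => j < i),
              (algebraMap F (NTAlg S) (T i j) * ntGen S j * ntGen S i +
                if j = k₀ then algebraMap F (NTAlg S) (β * T i r₀) * (ntGen S k₀ * ntGen S i)
                else 0) := by
          refine Finset.sum_congr rfl fun j hj => ?_
          rw [hS i j, if_neg (by rintro ⟨h, -⟩; exact hi h)]
          by_cases hj' : j = k₀
          · rw [hj', if_pos ⟨hlt, rfl⟩, if_pos rfl]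
            simp only [map_add, map_mul]
            ring
          · rw [if_neg (by rintro ⟨-, h⟩; exact hj' h), if_neg hj', add_zero, mul_assoc]
        rw [ntRel S i, e2, Finset.sum_add_distrib, Finset.sum_ite_eq' _ k₀ _, if_pos hmem',
          map_mul, hb]
        ring
      · rw [hvi, ntRel S i]
        refine Finset.sum_congr rfl fun j hj => ?_
        have hji : j < i := by simpa using hj
        have hjr : j ≠ r₀ := fun h => hlt (h ▸ hji)
        rw [hS i j, if_neg (by rintro ⟨h, -⟩; exact hi h),
          if_neg (by rintro ⟨h, -⟩; exact hlt h),
          show v j = ntGen S j by simp [hv, hjr], mul_assoc]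
  have hsub : ntIdeal T ≤ RingHom.ker ((MvPolynomial.aeval v :
      MvPolynomial (Fin n) F →ₐ[F] NTAlg S) : MvPolynomial (Fin n) F →+* NTAlg S) := by
    rw [ntIdeal, Ideal.span_le]
    rintro p ⟨i, rfl⟩
    simp only [SetLike.mem_coe, RingHom.mem_ker, AlgHom.coe_toRingHom]
    rw [map_sub, map_pow, map_sum, sub_eq_zero]
    rw [MvPolynomial.aeval_X, hgen i]
    refine Finset.sum_congr rfl fun j _ => ?_
    rw [map_mul, map_mul, MvPolynomial.aeval_X, MvPolynomial.aeval_X, MvPolynomial.aeval_C]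
  refine ⟨Ideal.Quotient.liftₐ (ntIdeal T) (MvPolynomial.aeval v)
    (fun a ha => by simpa using hsub ha), fun p => ?_⟩
  rw [Ideal.Quotient.liftₐ_apply]
  exact Ideal.Quotient.lift_mk _ _ _

end Stmt6Aux

open Stmt6Aux in
/-- The elementary triangular operation `Q_{(r₀,k₀)}(T, β)` (under the stated restrictions)
yields an isomorphic algebra, via `X_{r₀} ↦ β Y_{k₀} + Y_{r₀}`, `X_r ↦ Y_r` for `r ≠ r₀`. -/
theorem stmt6 {n : ℕ} (h2 : (2 : F) ≠ 0) (T : Matrix (Fin n) (Fin n) F) (hT : SLT T)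
    (k₀ r₀ : Fin n) (hk : k₀ < r₀) (β : F)
    (hzero : ∀ j : Fin n, k₀ < j → T r₀ j = 0)
    (hcond : k₀.val = 0 ∨ (0 < k₀.val ∧
      ∀ i : Fin n, i < k₀ → T r₀ i + T r₀ k₀ * T k₀ i = β * T k₀ i))
    (S : Matrix (Fin n) (Fin n) F)
    (hS : ∀ r k : Fin n, S r k =
      if r = r₀ ∧ k = k₀ then T r₀ k₀ - 2 * β
      else if r₀ < r ∧ k = k₀ then T r k₀ + β * T r r₀
      else T r k) :
    ∃ e : NTAlg T ≃ₐ[F] NTAlg S,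
      e (ntGen T r₀) = β • ntGen S k₀ + ntGen S r₀ ∧
      ∀ r : Fin n, r ≠ r₀ → e (ntGen T r) = ntGen S r := by
  have hkne : k₀ ≠ r₀ := hk.ne
  have hcond' : ∀ i : Fin n, i < k₀ → T r₀ i + T r₀ k₀ * T k₀ i = β * T k₀ i := by
    intro i hik
    rcases hcond with h0 | ⟨-, h⟩
    · exact absurd hik (by rw [Fin.lt_def, h0]; omega)
    · exact h i hik
  obtain ⟨f, hf⟩ := mainHom T k₀ r₀ hk β hzero hcond' S hS
  have hSr : ∀ j : Fin n, k₀ < j → S r₀ j = 0 := by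
    intro j hj
    rw [hS, if_neg (by rintro ⟨-, h⟩; exact hj.ne' h),
      if_neg (by rintro ⟨h, -⟩; exact lt_irrefl _ h)]
    exact hzero j hj
  have hScond : ∀ i : Fin n, i < k₀ → S r₀ i + S r₀ k₀ * S k₀ i = (-β) * S k₀ i := by
    intro i hik
    have e1 : S r₀ i = T r₀ i := by
      rw [hS, if_neg (by rintro ⟨-, h⟩; exact hik.ne h),
        if_neg (by rintro ⟨h, -⟩; exact lt_irrefl _ h)]
    have e2 : S k₀ i = T k₀ i := by
      rw [hS, if_neg (by rintro ⟨h, -⟩; exact hkne h),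
        if_neg (by rintro ⟨h, -⟩; exact lt_asymm hk h)]
    have e3 : S r₀ k₀ = T r₀ k₀ - 2 * β := by rw [hS, if_pos ⟨rfl, rfl⟩]
    rw [e1, e2, e3]
    linear_combination hcond' i hik
  have hTS : ∀ r k : Fin n, T r k =
      if r = r₀ ∧ k = k₀ then S r₀ k₀ - 2 * (-β)
      else if r₀ < r ∧ k = k₀ then S r k₀ + (-β) * S r r₀
      else S r k := by
    intro r k
    by_cases h1 : r = r₀ ∧ k = k₀
    · rw [if_pos h1, h1.1, h1.2, hS, if_pos ⟨rfl, rfl⟩]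
      ring
    · rw [if_neg h1]
      by_cases h2' : r₀ < r ∧ k = k₀
      · rw [if_pos h2', h2'.2]
        have e1 : S r k₀ = T r k₀ + β * T r r₀ := by
          rw [hS, if_neg (by rintro ⟨h, -⟩; exact h1 ⟨h, h2'.2⟩), if_pos ⟨h2'.1, rfl⟩]
        have e2 : S r r₀ = T r r₀ := by
          rw [hS, if_neg (by rintro ⟨-, h⟩; exact hkne h.symm),
            if_neg (by rintro ⟨-, h⟩; exact hkne h.symm)]
        rw [e1, e2]
        ring
      · rw [if_neg h2', hS, if_neg h1, if_neg h2']
  obtain ⟨g, hg⟩ := mainHom S k₀ r₀ hk (-β) hSr hScond T hTS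
  have hfg : ∀ i : Fin n, f (g (Ideal.Quotient.mk (ntIdeal S) (MvPolynomial.X i)))
      = Ideal.Quotient.mk (ntIdeal S) (MvPolynomial.X i) := by
    intro i
    rw [hg, MvPolynomial.aeval_X]
    by_cases hi : i = r₀
    · rw [hi, if_pos rfl, map_add, map_mul, AlgHom.commutes,
        show ntGen T r₀ = Ideal.Quotient.mk (ntIdeal T) (MvPolynomial.X r₀) from rfl,
        show ntGen T k₀ = Ideal.Quotient.mk (ntIdeal T) (MvPolynomial.X k₀) from rfl,
        hf, hf, MvPolynomial.aeval_X, MvPolynomial.aeval_X, if_pos rfl, if_neg hkne,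
        add_zero, map_neg]
      show _ = ntGen S r₀
      ring
    · rw [if_neg hi, add_zero,
        show ntGen T i = Ideal.Quotient.mk (ntIdeal T) (MvPolynomial.X i) from rfl,
        hf, MvPolynomial.aeval_X, if_neg hi, add_zero]
      rfl
  have hgf : ∀ i : Fin n, g (f (Ideal.Quotient.mk (ntIdeal T) (MvPolynomial.X i)))
      = Ideal.Quotient.mk (ntIdeal T) (MvPolynomial.X i) := by
    intro i
    rw [hf, MvPolynomial.aeval_X]
    by_cases hi : i = r₀
    · rw [hi, if_pos rfl, map_add, map_mul, AlgHom.commutes,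
        show ntGen S r₀ = Ideal.Quotient.mk (ntIdeal S) (MvPolynomial.X r₀) from rfl,
        show ntGen S k₀ = Ideal.Quotient.mk (ntIdeal S) (MvPolynomial.X k₀) from rfl,
        hg, hg, MvPolynomial.aeval_X, MvPolynomial.aeval_X, if_pos rfl, if_neg hkne,
        add_zero, map_neg]
      show _ = ntGen T r₀
      ring
    · rw [if_neg hi, add_zero,
        show ntGen S i = Ideal.Quotient.mk (ntIdeal S) (MvPolynomial.X i) from rfl,
        hg, MvPolynomial.aeval_X, if_neg hi, add_zero]
      rfl
  have hcomp1 : f.comp g = AlgHom.id F (NTAlg S) := by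
    apply Ideal.Quotient.algHom_ext
    apply MvPolynomial.algHom_ext
    intro i
    simpa using hfg i
  have hcomp2 : g.comp f = AlgHom.id F (NTAlg T) := by
    apply Ideal.Quotient.algHom_ext
    apply MvPolynomial.algHom_ext
    intro i
    simpa using hgf i
  refine ⟨AlgEquiv.ofAlgHom f g hcomp1 hcomp2, ?_, ?_⟩
  · show f (ntGen T r₀) = _
    rw [show ntGen T r₀ = Ideal.Quotient.mk (ntIdeal T) (MvPolynomial.X r₀) from rfl, hf,
      MvPolynomial.aeval_X, if_pos rfl]
    have hsm : β • ntGen S k₀ = algebraMap F (NTAlg S) β * ntGen S k₀ :=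
      Algebra.smul_def β (ntGen S k₀)
    rw [hsm]
    ring
  · intro r hr
    show f (ntGen T r) = _
    rw [show ntGen T r = Ideal.Quotient.mk (ntIdeal T) (MvPolynomial.X r) from rfl, hf,
      MvPolynomial.aeval_X, if_neg hr, add_zero]

end
end

section
/- Let F be a field of characteristic ≠ 2. For any t, s ∈ F, the F-algebras A(T) and A(S), where T is the 2×2 strictly lower triangular matrix with entry t in position (2,1) and S has entry s in position (2,1), are isomorphic. Explicitly, X_1 ↦ Y_1, X_2 ↦ ((t−s)/2) Y_1 + Y_2 defines an isomorphism A(T) → A(S). -/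
open scoped BigOperators

noncomputable section

variable {F : Type} [Field F]

-- aux
lemma filt0 : (Finset.univ.filter (fun j => j < (0 : Fin 2))) = ∅ := by decide
lemma filt1 : (Finset.univ.filter (fun j => j < (1 : Fin 2))) = {0} := by decide

lemma mem0 (a : F) : (MvPolynomial.X 0 ^ 2 : MvPolynomial (Fin 2) F) ∈ ntIdeal !![0,0;a,0] := by
  apply Ideal.subset_span
  refine ⟨0, ?_⟩
  rw [filt0, Finset.sum_empty, sub_zero]

lemma mem1 (a : F) : (MvPolynomial.X 1 ^ 2 - MvPolynomial.C a * MvPolynomial.X 0 * MvPolynomial.X 1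
    : MvPolynomial (Fin 2) F) ∈ ntIdeal !![0,0;a,0] := by
  apply Ideal.subset_span
  refine ⟨1, ?_⟩
  rw [filt1, Finset.sum_singleton]
  norm_num

lemma gen0_sq (a : F) : ntGen !![0,0;a,0] 0 ^ 2 = 0 := by
  have h := (Ideal.Quotient.eq_zero_iff_mem).2 (mem0 a)
  show Ideal.Quotient.mk (ntIdeal !![0,0;a,0]) (MvPolynomial.X 0) ^ 2 = 0
  rw [← map_pow]; exact h

lemma gen1_sq (a : F) : ntGen !![0,0;a,0] 1 ^ 2
    = algebraMap F _ a * (ntGen !![0,0;a,0] 0 * ntGen !![0,0;a,0] 1) := by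
  have h := (Ideal.Quotient.eq_zero_iff_mem).2 (mem1 a)
  rw [map_sub, map_pow, map_mul, map_mul, sub_eq_zero] at h
  show Ideal.Quotient.mk (ntIdeal !![0,0;a,0]) (MvPolynomial.X 1) ^ 2 = _
  rw [h]
  have hC : (Ideal.Quotient.mk (ntIdeal !![0,0;a,0]) (MvPolynomial.C a)) = algebraMap F _ a := rfl
  rw [hC]; unfold ntGen; ring

def fwd (a c : F) : MvPolynomial (Fin 2) F →ₐ[F] NTAlg (!![0,0;a,0] : Matrix (Fin 2) (Fin 2) F) :=
  MvPolynomial.aeval ![ntGen !![0,0;a,0] 0, algebraMap F _ c * ntGen !![0,0;a,0] 0 + ntGen !![0,0;a,0] 1]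

lemma fwd_X0 (a c : F) : fwd a c (MvPolynomial.X 0) = ntGen !![0,0;a,0] 0 := by
  rw [fwd, MvPolynomial.aeval_X, Matrix.cons_val_zero]

lemma fwd_X1 (a c : F) : fwd a c (MvPolynomial.X 1)
    = algebraMap F _ c * ntGen !![0,0;a,0] 0 + ntGen !![0,0;a,0] 1 := by
  rw [fwd, MvPolynomial.aeval_X, Matrix.cons_val_one, Matrix.cons_val_zero]

lemma fwd_ker (t a c : F) (h : 2 * c = t - a) :
    ntIdeal (!![0,0;t,0] : Matrix (Fin 2) (Fin 2) F) ≤ RingHom.ker (fwd a c) := by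
  rw [ntIdeal, Ideal.span_le]
  rintro p ⟨i, rfl⟩
  have hA : 2 * algebraMap F (NTAlg (!![0,0;a,0] : Matrix (Fin 2) (Fin 2) F)) c
      = algebraMap F _ t - algebraMap F _ a := by
    have := congrArg (algebraMap F (NTAlg (!![0,0;a,0] : Matrix (Fin 2) (Fin 2) F))) h
    rw [map_mul, map_sub, map_ofNat] at this
    exact this
  fin_cases i <;> simp only [Fin.zero_eta, Fin.mk_one, SetLike.mem_coe, RingHom.mem_ker]
  · rw [filt0, Finset.sum_empty, sub_zero, map_pow, fwd_X0]
    exact gen0_sq a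
  · have hT : (!![0,0;t,0] : Matrix (Fin 2) (Fin 2) F) 1 0 = t := by norm_num
    rw [filt1, Finset.sum_singleton, hT, map_sub, map_pow, map_mul, map_mul,
      fwd_X0, fwd_X1]
    have hCt : fwd a c (MvPolynomial.C t) = algebraMap F _ t := by
      rw [fwd]; exact MvPolynomial.aeval_C _ t
    rw [hCt]
    have g0 := gen0_sq a
    have g1 := gen1_sq a
    linear_combination (algebraMap F (NTAlg (!![0,0;a,0] : Matrix (Fin 2) (Fin 2) F)) c ^ 2
      - algebraMap F _ t * algebraMap F _ c) * g0 + g1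
      + (ntGen !![0,0;a,0] 0 * ntGen !![0,0;a,0] 1) * hA

def desc (t a c : F) (h : 2 * c = t - a) :
    NTAlg (!![0,0;t,0] : Matrix (Fin 2) (Fin 2) F) →ₐ[F] NTAlg (!![0,0;a,0] : Matrix (Fin 2) (Fin 2) F) :=
  Ideal.Quotient.liftₐ _ (fwd a c) (fun x hx => fwd_ker t a c h hx)

lemma desc_gen (t a c : F) (h : 2 * c = t - a) (i : Fin 2) :
    desc t a c h (ntGen !![0,0;t,0] i) = fwd a c (MvPolynomial.X i) := rfl

lemma roundtrip (t a c : F) (h : 2 * c = t - a) (h' : 2 * (-c) = a - t) :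
    (desc a t (-c) h').comp (desc t a c h)
      = AlgHom.id F (NTAlg (!![0,0;t,0] : Matrix (Fin 2) (Fin 2) F)) := by
  apply Ideal.Quotient.algHom_ext
  apply MvPolynomial.algHom_ext
  intro i
  simp only [AlgHom.comp_apply, Ideal.Quotient.mkₐ_eq_mk, AlgHom.id_apply]
  have hmk : ∀ (j : Fin 2), Ideal.Quotient.mk (ntIdeal (!![0,0;t,0] : Matrix (Fin 2) (Fin 2) F))
      (MvPolynomial.X j) = ntGen !![0,0;t,0] j := fun _ => rfl
  fin_cases i <;> simp only [Fin.zero_eta, Fin.mk_one, hmk]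
  · rw [desc_gen, fwd_X0]
    show (desc a t (-c) h') (ntGen !![0,0;a,0] 0) = _
    rw [desc_gen, fwd_X0]
  · rw [desc_gen, fwd_X1, map_add, map_mul, AlgHom.commutes]
    have e0 : (desc a t (-c) h') (ntGen !![0,0;a,0] 0) = ntGen !![0,0;t,0] 0 := by
      rw [desc_gen, fwd_X0]
    have e1 : (desc a t (-c) h') (ntGen !![0,0;a,0] 1)
        = algebraMap F _ (-c) * ntGen !![0,0;t,0] 0 + ntGen !![0,0;t,0] 1 := by
      rw [desc_gen, fwd_X1]
    rw [e0, e1, map_neg]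
    ring


/-- For any `t, s ∈ F`, the 2-generator algebras `A(T)` and `A(S)` are isomorphic via
`X₁ ↦ Y₁`, `X₂ ↦ ((t − s)/2) Y₁ + Y₂`. -/
theorem stmt7 (h2 : (2 : F) ≠ 0) (t s : F) :
    ∃ e : NTAlg (!![0, 0; t, 0] : Matrix (Fin 2) (Fin 2) F) ≃ₐ[F]
          NTAlg (!![0, 0; s, 0] : Matrix (Fin 2) (Fin 2) F),
      e (ntGen !![0, 0; t, 0] 0) = ntGen !![0, 0; s, 0] 0 ∧
      e (ntGen !![0, 0; t, 0] 1) =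
        ((t - s) / 2) • ntGen !![0, 0; s, 0] 0 + ntGen !![0, 0; s, 0] 1 := by
  set c := (t - s) / 2 with hc
  have h : 2 * c = t - s := by rw [hc, mul_div_assoc', mul_comm, mul_div_assoc, div_self h2, mul_one]
  have h' : 2 * (-c) = s - t := by linear_combination -h
  have h'' : 2 * (- -c) = t - s := by linear_combination h
  refine ⟨AlgEquiv.ofAlgHom (desc t s c h) (desc s t (-c) h')
      (by have := roundtrip s t (-c) h' h''
          rwa [show desc t s (- -c) h'' = desc t s c h by congr 1; ring] at this)
      (roundtrip t s c h h'), ?_, ?_⟩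
  · show (desc t s c h) (ntGen !![0,0;t,0] 0) = _
    rw [desc_gen, fwd_X0]
  · show (desc t s c h) (ntGen !![0,0;t,0] 1) = _
    rw [desc_gen, fwd_X1, ← Algebra.smul_def]
end
end

section
/- Let F be a field of characteristic ≠ 2. The F-algebra A(0₃) (commutative, generated by X_1, X_2, X_3 with X_i² = 0 for all i) is not isomorphic, by any graded-degree-preserving algebra isomorphism (equivalently, by any isomorphism induced by an invertible linear map on the span of the generators), to the algebra A(B_{3,2}) generated by Y_1, Y_2, Y_3 with relations Y_1² = Y_2² = 0 and Y_3² = Y_1 Y_3 + Y_2 Y_3. -/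
open scoped BigOperators

set_option synthInstance.maxHeartbeats 1000000
set_option maxHeartbeats 1000000
set_option maxRecDepth 10000

noncomputable section

variable {F : Type} [Field F]

/-- The matrix `B_{3,2}` with entries 1 in positions (3,1) and (3,2) (1-based). -/
def B32 : Matrix (Fin 3) (Fin 3) F :=
  !![0, 0, 0; 0, 0, 0; 1, 1, 0]

/-! ### Auxiliary material -/

local notation "DD" => DualNumber (DualNumber F)

def uu : DualNumber (DualNumber F) := TrivSqZeroExt.inl DualNumber.eps
def vv : DualNumber (DualNumber F) := DualNumber.eps
def ww : DualNumber (DualNumber F) := TrivSqZeroExt.inr DualNumber.eps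

lemma uu_mul_uu : (uu : DD) * uu = 0 := by
  rw [uu, TrivSqZeroExt.inl_mul_inl, DualNumber.eps_mul_eps, TrivSqZeroExt.inl_zero]
lemma vv_mul_vv : (vv : DD) * vv = 0 := by
  rw [vv, DualNumber.eps_mul_eps]
lemma uu_mul_vv : (uu : DD) * vv = ww := by
  rw [uu, ww, show (vv : DD) = TrivSqZeroExt.inr (1 : DualNumber F) from rfl,
    TrivSqZeroExt.inl_mul_inr, smul_eq_mul, mul_one]

lemma amap_mul_ww (d : F) (h : algebraMap F (DualNumber (DualNumber F)) d * ww = 0) : d = 0 := by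
  rw [TrivSqZeroExt.algebraMap_eq_inl', TrivSqZeroExt.algebraMap_eq_inl, ww,
    TrivSqZeroExt.inl_mul_inr, smul_eq_mul,
    show (DualNumber.eps : DualNumber F) = TrivSqZeroExt.inr (1:F) from rfl,
    TrivSqZeroExt.inl_mul_inr, smul_eq_mul, mul_one] at h
  have h2 : TrivSqZeroExt.inr (TrivSqZeroExt.inr d) = (0 : DD) := h
  rw [show (0:DD) = TrivSqZeroExt.inr (0 : DualNumber F) from (TrivSqZeroExt.inr_zero _).symm] at h2
  have h3 := TrivSqZeroExt.inr_injective h2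
  rw [show (0:DualNumber F) = TrivSqZeroExt.inr (0 : F) from (TrivSqZeroExt.inr_zero _).symm] at h3
  exact TrivSqZeroExt.inr_injective h3

lemma sq_comb (c₀ c₁ : F)
    (h : (algebraMap F (DualNumber (DualNumber F)) c₀ * uu + algebraMap F (DualNumber (DualNumber F)) c₁ * vv)
      * (algebraMap F (DualNumber (DualNumber F)) c₀ * uu + algebraMap F (DualNumber (DualNumber F)) c₁ * vv) = 0) :
    2 * (c₀ * c₁) = 0 := by
  apply amap_mul_ww
  rw [map_mul, map_mul, map_ofNat]
  linear_combination h - (algebraMap F DD c₀ * algebraMap F DD c₀) * uu_mul_uu (F := F)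
    - (algebraMap F DD c₁ * algebraMap F DD c₁) * vv_mul_vv (F := F)
    - (2 * algebraMap F DD c₀ * algebraMap F DD c₁) * uu_mul_vv (F := F)

lemma smul_d (c : F) (x : DualNumber F) : c • x = algebraMap F (DualNumber F) c * x := by
  rw [TrivSqZeroExt.algebraMap_eq_inl]
  refine TrivSqZeroExt.ext ?_ ?_
  · rw [TrivSqZeroExt.fst_smul, TrivSqZeroExt.fst_mul, TrivSqZeroExt.fst_inl, smul_eq_mul]
  · rw [TrivSqZeroExt.snd_smul, TrivSqZeroExt.snd_mul, TrivSqZeroExt.snd_inl, TrivSqZeroExt.fst_inl,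
      smul_zero, add_zero]

lemma smul_dd (c : F) (x : DualNumber (DualNumber F)) :
    c • x = algebraMap F (DualNumber (DualNumber F)) c * x := by
  rw [TrivSqZeroExt.algebraMap_eq_inl']
  refine TrivSqZeroExt.ext ?_ ?_
  · rw [TrivSqZeroExt.fst_smul, TrivSqZeroExt.fst_mul, TrivSqZeroExt.fst_inl, ← smul_d]
  · rw [TrivSqZeroExt.snd_smul, TrivSqZeroExt.snd_mul, TrivSqZeroExt.snd_inl, TrivSqZeroExt.fst_inl,
      smul_zero, add_zero, smul_eq_mul, ← smul_d]

lemma genSq (j : Fin 3) : (ntGen (0 : Matrix (Fin 3) (Fin 3) F) j)^2 = 0 := by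
  have hmem : (MvPolynomial.X j : MvPolynomial (Fin 3) F)^2 ∈ ntIdeal (0 : Matrix (Fin 3) (Fin 3) F) := by
    apply Ideal.subset_span
    exact ⟨j, by simp⟩
  rw [ntGen, ← map_pow]
  exact Ideal.Quotient.eq_zero_iff_mem.mpr hmem

section lift
variable {A : Type} [CommRing A] [Algebra F A]

lemma aeval_vanish (y : Fin 3 → A) (h0 : y 0 * y 0 = 0) (h1 : y 1 * y 1 = 0)
    (hr : y 2 * y 2 = y 0 * y 2 + y 1 * y 2) :
    ∀ a ∈ ntIdeal (B32 : Matrix (Fin 3) (Fin 3) F), MvPolynomial.aeval y a = 0 := by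
  intro a ha
  have hle : ntIdeal (B32 : Matrix (Fin 3) (Fin 3) F) ≤ RingHom.ker (MvPolynomial.aeval y).toRingHom := by
    rw [ntIdeal, Ideal.span_le]
    rintro p ⟨i, rfl⟩
    simp only [SetLike.mem_coe, RingHom.mem_ker, AlgHom.toRingHom_eq_coe, RingHom.coe_coe]
    fin_cases i
    · simp [Finset.sum_filter, Fin.sum_univ_three, B32, sq]
      linear_combination h0
    · simp [Finset.sum_filter, Fin.sum_univ_three, B32, sq]
      linear_combination h1
    · simp [Finset.sum_filter, Fin.sum_univ_three, B32, sq]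
      linear_combination hr
  exact hle ha

def liftHom (y : Fin 3 → A) (h0 : y 0 * y 0 = 0) (h1 : y 1 * y 1 = 0)
    (hr : y 2 * y 2 = y 0 * y 2 + y 1 * y 2) :
    NTAlg (B32 : Matrix (Fin 3) (Fin 3) F) →ₐ[F] A :=
  Ideal.Quotient.liftₐ (ntIdeal (B32 : Matrix (Fin 3) (Fin 3) F))
    (MvPolynomial.aeval y : MvPolynomial (Fin 3) F →ₐ[F] A) (aeval_vanish y h0 h1 hr)

lemma liftHom_gen (y : Fin 3 → A) (h0 : y 0 * y 0 = 0) (h1 : y 1 * y 1 = 0)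
    (hr : y 2 * y 2 = y 0 * y 2 + y 1 * y 2) (i : Fin 3) :
    liftHom y h0 h1 hr (ntGen (B32 : Matrix (Fin 3) (Fin 3) F) i) = y i := by
  rw [liftHom, ntGen, Ideal.Quotient.liftₐ_apply]
  exact MvPolynomial.aeval_X y i

end lift

/-- There is no degree-preserving isomorphism `A(0₃) → A(B_{3,2})`. -/
theorem stmt8 (h2 : (2 : F) ≠ 0) :
    ¬ NTIso (0 : Matrix (Fin 3) (Fin 3) F) (B32 : Matrix (Fin 3) (Fin 3) F) := by
  rintro ⟨e, Γ, hΓ⟩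
  -- the square of the image of each generator is zero
  have himg : ∀ j : Fin 3, (∑ i : Fin 3, Γ i j • ntGen (B32 : Matrix (Fin 3) (Fin 3) F) i)^2 = 0 := by
    intro j
    rw [← hΓ j, ← map_pow, genSq j, map_zero]
  -- three functionals
  have key : ∀ (y : Fin 3 → DD) (h0 : y 0 * y 0 = 0) (h1 : y 1 * y 1 = 0)
      (hr : y 2 * y 2 = y 0 * y 2 + y 1 * y 2) (j : Fin 3),
      (algebraMap F DD (Γ 0 j) * y 0 + algebraMap F DD (Γ 1 j) * y 1
        + algebraMap F DD (Γ 2 j) * y 2)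
        * (algebraMap F DD (Γ 0 j) * y 0 + algebraMap F DD (Γ 1 j) * y 1
        + algebraMap F DD (Γ 2 j) * y 2) = 0 := by
    intro y h0 h1 hr j
    have E := congrArg (liftHom y h0 h1 hr) (himg j)
    rw [map_pow, map_zero] at E
    simp only [Fin.sum_univ_three, map_add, map_smul, liftHom_gen, sq, smul_dd] at E
    exact E
  have hΓ2 : ∀ j : Fin 3, Γ 2 j = 0 := by
    intro j
    set b0 := Γ 0 j with hb0; set b1 := Γ 1 j with hb1; set b2 := Γ 2 j with hb2
    -- functional A : detects coefficient of Y₁Y₂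
    have eA : 2 * (b0 * b1) = 0 := by
      have h0 : (uu : DD) * uu = 0 := uu_mul_uu
      have h1 : (vv : DD) * vv = 0 := vv_mul_vv
      have EA := key ![uu, vv, 0] (by simpa using uu_mul_uu (F := F))
        (by simpa using vv_mul_vv (F := F)) (by simp) j
      apply sq_comb
      simpa using EA
    -- functional B : detects coefficient of Y₁Y₃ (relation shifted)
    have eB : 2 * ((2 * b0 + b2) * b2) = 0 := by
      have EB := key ![uu + uu, 0, uu + vv]
        (by simpa using (by linear_combination (4 : DD) * uu_mul_uu (F := F) :
          ((uu : DD) + uu) * (uu + uu) = 0))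
        (by simp)
        (by simpa using (by linear_combination vv_mul_vv (F := F) - uu_mul_uu (F := F) :
          ((uu : DD) + vv) * (uu + vv) = (uu + uu) * (uu + vv) + 0 * (uu + vv))) j
      apply sq_comb
      simp only [Matrix.cons_val_zero, Matrix.cons_val_one, Matrix.head_cons,
        Matrix.cons_val_two, Matrix.tail_cons] at EB
      rw [show algebraMap F DD (2 * b0 + b2) = algebraMap F DD b0 * 2 + algebraMap F DD b2 by
        rw [map_add, map_mul, map_ofNat]; ring]
      linear_combination EB
    -- functional C : detects coefficient of Y₂Y₃
    have eC : 2 * ((2 * b1 + b2) * b2) = 0 := by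
      have EC := key ![0, uu + uu, uu + vv]
        (by simp)
        (by simpa using (by linear_combination (4 : DD) * uu_mul_uu (F := F) :
          ((uu : DD) + uu) * (uu + uu) = 0))
        (by simpa using (by linear_combination vv_mul_vv (F := F) - uu_mul_uu (F := F) :
          ((uu : DD) + vv) * (uu + vv) = 0 * (uu + vv) + (uu + uu) * (uu + vv))) j
      apply sq_comb
      simp only [Matrix.cons_val_zero, Matrix.cons_val_one, Matrix.head_cons,
        Matrix.cons_val_two, Matrix.tail_cons] at EC
      rw [show algebraMap F DD (2 * b1 + b2) = algebraMap F DD b1 * 2 + algebraMap F DD b2 by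
        rw [map_add, map_mul, map_ofNat]; ring]
      linear_combination EC
    -- algebra: conclude b2 = 0
    have e1 : b0 * b1 = 0 := by
      rcases mul_eq_zero.mp eA with h | h
      · exact absurd h h2
      · exact h
    have e2 : (2 * b0 + b2) * b2 = 0 := by
      rcases mul_eq_zero.mp eB with h | h
      · exact absurd h h2
      · exact h
    have e3 : (2 * b1 + b2) * b2 = 0 := by
      rcases mul_eq_zero.mp eC with h | h
      · exact absurd h h2
      · exact h
    by_contra hb
    have f2 : 2 * b0 + b2 = 0 := by
      rcases mul_eq_zero.mp e2 with h | h
      · exact h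
      · exact absurd h hb
    have f3 : 2 * b1 + b2 = 0 := by
      rcases mul_eq_zero.mp e3 with h | h
      · exact h
      · exact absurd h hb
    have hbb : b0 = b1 := by
      have h24 : 2 * b0 = 2 * b1 := by linear_combination f2 - f3
      exact mul_left_cancel₀ h2 h24
    have hb0' : b0 = 0 := by
      have he : b0 * b0 = 0 := by rw [hbb] at e1 ⊢; exact e1
      exact mul_self_eq_zero.mp he
    exact hb (by linear_combination f2 - 2 * hb0')
  -- final contradiction via the dual numbers
  have hg0 : (0 : DualNumber F) * 0 = 0 := by simp
  have hgr : (DualNumber.eps : DualNumber F) * DualNumber.eps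
      = 0 * DualNumber.eps + 0 * DualNumber.eps := by
    simp [DualNumber.eps_mul_eps]
  let g : NTAlg (B32 : Matrix (Fin 3) (Fin 3) F) →ₐ[F] DualNumber F :=
    liftHom ![0, 0, DualNumber.eps] (by simpa using hg0) (by simpa using hg0)
      (by simpa using hgr)
  have hgen : ∀ i : Fin 3, g (ntGen (B32 : Matrix (Fin 3) (Fin 3) F) i)
      = ![0, 0, DualNumber.eps] i := fun i => liftHom_gen _ _ _ _ i
  have hkill : ∀ i : Fin 3, g (e (ntGen (0 : Matrix (Fin 3) (Fin 3) F) i)) = 0 := by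
    intro i
    rw [hΓ i]
    simp [Fin.sum_univ_three, hgen, hΓ2 i]
  have hcomp : ∀ p : MvPolynomial (Fin 3) F,
      g (e (Ideal.Quotient.mk (ntIdeal (0 : Matrix (Fin 3) (Fin 3) F)) p))
        = MvPolynomial.aeval (0 : Fin 3 → DualNumber F) p := by
    intro p
    have hhom : ((g.comp e.toAlgHom).comp (Ideal.Quotient.mkₐ F (ntIdeal (0 : Matrix (Fin 3) (Fin 3) F))))
        = MvPolynomial.aeval (0 : Fin 3 → DualNumber F) := by
      apply MvPolynomial.algHom_ext
      intro i
      simp only [AlgHom.comp_apply, Ideal.Quotient.mkₐ_eq_mk, AlgEquiv.toAlgHom_eq_coe,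
        AlgHom.coe_coe, MvPolynomial.aeval_X]
      have := hkill i
      rw [ntGen] at this
      simpa using this
    have := congrArg (fun φ => φ p) hhom
    simpa using this
  obtain ⟨p, hp⟩ := Ideal.Quotient.mk_surjective
    (e.symm (ntGen (B32 : Matrix (Fin 3) (Fin 3) F) 2))
  have heps : (DualNumber.eps : DualNumber F)
      = MvPolynomial.aeval (0 : Fin 3 → DualNumber F) p := by
    have h1 : g (ntGen (B32 : Matrix (Fin 3) (Fin 3) F) 2) = DualNumber.eps := by
      rw [hgen]; simp
    rw [← h1, show ntGen (B32 : Matrix (Fin 3) (Fin 3) F) 2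
      = e (e.symm (ntGen (B32 : Matrix (Fin 3) (Fin 3) F) 2)) from (e.apply_symm_apply _).symm,
      ← hp]
    exact hcomp p
  rw [MvPolynomial.aeval_zero] at heps
  have hsnd := congrArg TrivSqZeroExt.snd heps
  rw [TrivSqZeroExt.algebraMap_eq_inl] at hsnd
  simp only [TrivSqZeroExt.snd_inl] at hsnd
  rw [show (DualNumber.eps : DualNumber F) = TrivSqZeroExt.inr (1:F) from rfl,
    TrivSqZeroExt.snd_inr] at hsnd
  exact one_ne_zero hsnd
end
end

section
/- Let F be a field of characteristic ≠ 2 and U = [u_{ij}] a 3×3 strictly lower triangular matrix over F with u_{32} ≠ 0 and Δ := 2u_{31} + u_{32}u_{21} ≠ 0. Then A(U) ≅ A(B_{3,2}); explicitly, the invertible matrix Γ with rows (2/Δ, u_{21}/Δ, 0), (0, 1/u_{32}, 0), (0, 0, 1) defines an isomorphism A(U) → A(B_{3,2}) via X_j ↦ Σ_i Γ_{ij} Y_i. -/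
open scoped BigOperators

noncomputable section

variable {F : Type} [Field F]

lemma ntRel {n : ℕ} (T : Matrix (Fin n) (Fin n) F) (i : Fin n) :
    (ntGen T i)^2 = Ideal.Quotient.mk (ntIdeal T)
      (∑ j ∈ Finset.univ.filter (fun j => j < i),
        MvPolynomial.C (T i j) * MvPolynomial.X j * MvPolynomial.X i) := by
  have h : (MvPolynomial.X i ^ 2 -
      ∑ j ∈ Finset.univ.filter (fun j => j < i),
        MvPolynomial.C (T i j) * MvPolynomial.X j * MvPolynomial.X i) ∈ ntIdeal T :=
    Ideal.subset_span ⟨i, rfl⟩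
  have h0 := Ideal.Quotient.eq_zero_iff_mem.mpr h
  rw [map_sub, sub_eq_zero] at h0
  simpa [ntGen, map_pow] using h0

lemma mkC {n : ℕ} (T : Matrix (Fin n) (Fin n) F) (a : F) :
    Ideal.Quotient.mk (ntIdeal T) (MvPolynomial.C a) = algebraMap F (NTAlg T) a := rfl

lemma ntRel0 (T : Matrix (Fin 3) (Fin 3) F) : (ntGen T 0)^2 = 0 := by
  have h := ntRel T 0
  rw [show (Finset.univ.filter (fun j => j < (0:Fin 3))) = ∅ by decide,
    Finset.sum_empty, map_zero] at h
  exact h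

lemma ntRel1 (T : Matrix (Fin 3) (Fin 3) F) :
    (ntGen T 1)^2 = algebraMap F (NTAlg T) (T 1 0) * (ntGen T 0 * ntGen T 1) := by
  have h := ntRel T 1
  rw [show (Finset.univ.filter (fun j => j < (1:Fin 3))) = {0} by decide,
    Finset.sum_singleton] at h
  rw [h]
  simp [ntGen, map_mul, mkC, mul_assoc]

lemma ntRel2 (T : Matrix (Fin 3) (Fin 3) F) :
    (ntGen T 2)^2 = algebraMap F (NTAlg T) (T 2 0) * (ntGen T 0 * ntGen T 2)
      + algebraMap F (NTAlg T) (T 2 1) * (ntGen T 1 * ntGen T 2) := by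
  have h := ntRel T 2
  rw [show (Finset.univ.filter (fun j => j < (2:Fin 3))) = {0, 1} by decide,
    Finset.sum_pair (by decide : (0:Fin 3) ≠ 1)] at h
  rw [h]
  simp [ntGen, map_mul, mkC, mul_assoc]

lemma aux_smul {n : ℕ} (T : Matrix (Fin n) (Fin n) F) (a : F) (q : NTAlg T) :
    a • q = algebraMap F (NTAlg T) a * q := Algebra.smul_def a q

lemma aux_lift_cond {T : Matrix (Fin 3) (Fin 3) F} {A : Type} [CommRing A] [Algebra F A]
    (v : Fin 3 → A)
    (h0 : v 0 ^ 2 = 0)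
    (h1 : v 1 ^ 2 = algebraMap F A (T 1 0) * (v 0 * v 1))
    (h2 : v 2 ^ 2 = algebraMap F A (T 2 0) * (v 0 * v 2) + algebraMap F A (T 2 1) * (v 1 * v 2)) :
    ∀ p ∈ ntIdeal T, MvPolynomial.aeval v p = 0 := by
  intro p hp
  have hle : ntIdeal T ≤ RingHom.ker (MvPolynomial.aeval v).toRingHom := by
    rw [ntIdeal, Ideal.span_le]
    rintro q ⟨i, rfl⟩
    simp only [SetLike.mem_coe, RingHom.mem_ker, AlgHom.toRingHom_eq_coe, RingHom.coe_coe,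
      map_sub, map_pow, map_sum, map_mul, MvPolynomial.aeval_X, MvPolynomial.aeval_C,
      sub_eq_zero]
    fin_cases i <;>
      simp only [Fin.isValue, Fin.zero_eta, Fin.mk_one, Fin.reduceFinMk]
    · rw [show (Finset.univ.filter (fun j => j < (0:Fin 3))) = ∅ by decide]
      simpa using h0
    · rw [show (Finset.univ.filter (fun j => j < (1:Fin 3))) = {0} by decide,
        Finset.sum_singleton]
      rw [h1]; ring
    · rw [show (Finset.univ.filter (fun j => j < (2:Fin 3))) = {0,1} by decide,
        Finset.sum_pair (by decide : (0:Fin 3) ≠ 1)]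
      rw [h2]; ring
  exact hle hp

set_option maxHeartbeats 1000000 in
set_option synthInstance.maxHeartbeats 100000 in
/-- If `u₃₂ ≠ 0` and `Δ = 2u₃₁ + u₃₂u₂₁ ≠ 0`, then `A(U) ≅ A(B_{3,2})` via the explicit
matrix `Γ` with rows `(2/Δ, u₂₁/Δ, 0)`, `(0, 1/u₃₂, 0)`, `(0, 0, 1)`. -/
theorem stmt9 (h2 : (2 : F) ≠ 0) (U : Matrix (Fin 3) (Fin 3) F) (hU : SLT U)
    (h32 : U 2 1 ≠ 0) (hΔ : 2 * U 2 0 + U 2 1 * U 1 0 ≠ 0) :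
    ∃ e : NTAlg U ≃ₐ[F] NTAlg (B32 : Matrix (Fin 3) (Fin 3) F),
      ∀ j : Fin 3, e (ntGen U j) =
        ∑ i : Fin 3,
          (!![2 / (2 * U 2 0 + U 2 1 * U 1 0), U 1 0 / (2 * U 2 0 + U 2 1 * U 1 0), 0;
              0, 1 / U 2 1, 0;
              0, 0, 1] : Matrix (Fin 3) (Fin 3) F) i j • ntGen B32 i := by
  set Δ : F := 2 * U 2 0 + U 2 1 * U 1 0 with hΔdef
  -- abbreviations
  set αB : F →+* NTAlg (B32 : Matrix (Fin 3) (Fin 3) F) :=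
    (algebraMap F (NTAlg (B32 : Matrix (Fin 3) (Fin 3) F))) with hαB
  set αU : F →+* NTAlg U := (algebraMap F (NTAlg U)) with hαU
  have hB10 : (B32 : Matrix (Fin 3) (Fin 3) F) 1 0 = 0 := by simp [B32]
  have hB20 : (B32 : Matrix (Fin 3) (Fin 3) F) 2 0 = 1 := by simp [B32]
  have hB21 : (B32 : Matrix (Fin 3) (Fin 3) F) 2 1 = 1 := by simp [B32]
  -- the generators and relations
  have hy0 : (ntGen (B32 : Matrix (Fin 3) (Fin 3) F) 0)^2 = 0 := ntRel0 _
  have hy1 : (ntGen (B32 : Matrix (Fin 3) (Fin 3) F) 1)^2 = 0 := by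
    have h := ntRel1 (B32 : Matrix (Fin 3) (Fin 3) F)
    rw [hB10, map_zero, zero_mul] at h; exact h
  have hy2 : (ntGen (B32 : Matrix (Fin 3) (Fin 3) F) 2)^2 =
      ntGen B32 0 * ntGen B32 2 + ntGen B32 1 * ntGen B32 2 := by
    have h := ntRel2 (B32 : Matrix (Fin 3) (Fin 3) F)
    rw [hB20, hB21, map_one, one_mul, one_mul] at h; exact h
  have hx0 : (ntGen U 0)^2 = 0 := ntRel0 _
  have hx1 : (ntGen U 1)^2 = αU (U 1 0) * (ntGen U 0 * ntGen U 1) := ntRel1 _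
  have hx2 : (ntGen U 2)^2 = αU (U 2 0) * (ntGen U 0 * ntGen U 2)
      + αU (U 2 1) * (ntGen U 1 * ntGen U 2) := ntRel2 _
  -- forward vector
  set vf : Fin 3 → NTAlg (B32 : Matrix (Fin 3) (Fin 3) F) :=
    ![αB (2/Δ) * ntGen B32 0,
      αB (U 1 0/Δ) * ntGen B32 0 + αB (1/U 2 1) * ntGen B32 1,
      ntGen B32 2] with hvf
  have hvf0 : vf 0 = αB (2/Δ) * ntGen B32 0 := rfl
  have hvf1 : vf 1 = αB (U 1 0/Δ) * ntGen B32 0 + αB (1/U 2 1) * ntGen B32 1 := rfl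
  have hvf2 : vf 2 = ntGen B32 2 := rfl
  -- forward relations
  have c0 : vf 0 ^ 2 = 0 := by
    rw [hvf0]; linear_combination (αB (2/Δ))^2 * hy0
  have c1 : vf 1 ^ 2 = αB (U 1 0) * (vf 0 * vf 1) := by
    rw [hvf0, hvf1]
    have key : (2 : F) * (U 1 0/Δ) * (1/U 2 1) = U 1 0 * (2/Δ) * (1/U 2 1) := by ring
    have key' : (2 : NTAlg (B32 : Matrix (Fin 3) (Fin 3) F)) * αB (U 1 0/Δ) * αB (1/U 2 1)
        = αB (U 1 0) * αB (2/Δ) * αB (1/U 2 1) := by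
      have h := congrArg αB key
      rw [map_mul, map_mul, map_mul, map_mul, map_ofNat] at h
      exact h
    linear_combination ((αB (U 1 0/Δ))^2 - αB (U 1 0) * αB (2/Δ) * αB (U 1 0/Δ)) * hy0
      + (αB (1/U 2 1))^2 * hy1
      + (ntGen (B32 : Matrix (Fin 3) (Fin 3) F) 0 * ntGen B32 1) * key'
  have c2 : vf 2 ^ 2 = αB (U 2 0) * (vf 0 * vf 2) + αB (U 2 1) * (vf 1 * vf 2) := by
    rw [hvf0, hvf1, hvf2]
    have k1 : U 2 0 * (2/Δ) + U 2 1 * (U 1 0/Δ) = 1 := by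
      rw [mul_div_assoc', mul_div_assoc', ← add_div, div_eq_one_iff_eq hΔ, hΔdef]; ring
    have k1' : αB (U 2 0) * αB (2/Δ) + αB (U 2 1) * αB (U 1 0/Δ) = 1 := by
      have h := congrArg αB k1
      rw [map_add, map_mul, map_mul, map_one] at h
      exact h
    have k2 : U 2 1 * (1/U 2 1) = 1 := by field_simp
    have k2' : αB (U 2 1) * αB (1/U 2 1) = 1 := by
      have h := congrArg αB k2
      rw [map_mul, map_one] at h
      exact h
    linear_combination hy2 - (ntGen (B32 : Matrix (Fin 3) (Fin 3) F) 0 * ntGen B32 2) * k1'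
      - (ntGen (B32 : Matrix (Fin 3) (Fin 3) F) 1 * ntGen B32 2) * k2'
  -- backward vector
  set vb : Fin 3 → NTAlg U :=
    ![αU (Δ/2) * ntGen U 0,
      αU (-(U 1 0 * U 2 1)/2) * ntGen U 0 + αU (U 2 1) * ntGen U 1,
      ntGen U 2] with hvb
  have hvb0 : vb 0 = αU (Δ/2) * ntGen U 0 := rfl
  have hvb1 : vb 1 = αU (-(U 1 0 * U 2 1)/2) * ntGen U 0 + αU (U 2 1) * ntGen U 1 := rfl
  have hvb2 : vb 2 = ntGen U 2 := rfl
  have b0 : vb 0 ^ 2 = 0 := by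
    rw [hvb0]; linear_combination (αU (Δ/2))^2 * hx0
  have b1 : vb 1 ^ 2 = αU ((B32 : Matrix (Fin 3) (Fin 3) F) 1 0) * (vb 0 * vb 1) := by
    rw [hB10, map_zero, zero_mul, hvb1]
    have key : (2:F) * (-(U 1 0 * U 2 1)/2) * U 2 1 + U 2 1^2 * U 1 0 = 0 := by
      field_simp
      ring
    have key' : (2 : NTAlg U) * αU (-(U 1 0 * U 2 1)/2) * αU (U 2 1)
        + αU (U 2 1)^2 * αU (U 1 0) = 0 := by
      have h := congrArg αU key
      rw [map_add, map_mul, map_mul, map_mul, map_pow, map_ofNat, map_zero] at h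
      exact h
    linear_combination (αU (-(U 1 0 * U 2 1)/2))^2 * hx0 + (αU (U 2 1))^2 * hx1
      + (ntGen U 0 * ntGen U 1) * key'
  have b2 : vb 2 ^ 2 = αU ((B32 : Matrix (Fin 3) (Fin 3) F) 2 0) * (vb 0 * vb 2)
      + αU ((B32 : Matrix (Fin 3) (Fin 3) F) 2 1) * (vb 1 * vb 2) := by
    rw [hB20, hB21, map_one, one_mul, one_mul, hvb0, hvb1, hvb2]
    have k : Δ/2 + (-(U 1 0 * U 2 1)/2) = U 2 0 := by
      rw [hΔdef]; field_simp; ring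
    have k' : αU (Δ/2) + αU (-(U 1 0 * U 2 1)/2) = αU (U 2 0) := by
      have h := congrArg αU k
      rw [map_add] at h
      exact h
    linear_combination hx2 - (ntGen U 0 * ntGen U 2) * k'
  -- the algebra homs
  set Φ : NTAlg U →ₐ[F] NTAlg (B32 : Matrix (Fin 3) (Fin 3) F) :=
    Ideal.Quotient.liftₐ (ntIdeal U) (MvPolynomial.aeval vf) (aux_lift_cond vf c0 c1 c2)
    with hΦdef
  set Ψ : NTAlg (B32 : Matrix (Fin 3) (Fin 3) F) →ₐ[F] NTAlg U :=
    Ideal.Quotient.liftₐ (ntIdeal (B32 : Matrix (Fin 3) (Fin 3) F)) (MvPolynomial.aeval vb)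
      (aux_lift_cond vb b0 b1 b2) with hΨdef
  have hΦx : ∀ i, Φ (ntGen U i) = vf i := by
    intro i
    simp [hΦdef, ntGen, Ideal.Quotient.liftₐ_apply, Ideal.Quotient.lift_mk]
    exact MvPolynomial.aeval_X vf i
  have hΨy : ∀ i, Ψ (ntGen (B32 : Matrix (Fin 3) (Fin 3) F) i) = vb i := by
    intro i
    simp [hΨdef, ntGen, Ideal.Quotient.liftₐ_apply, Ideal.Quotient.lift_mk]
    exact MvPolynomial.aeval_X vb i
  -- scalar identities for invertibility
  have s1 : (Δ/2) * (2/Δ) = 1 := by field_simp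
  have s2 : (U 2 1) * (1/U 2 1) = 1 := by field_simp
  have s3 : (-(U 1 0 * U 2 1)/2) * (2/Δ) + (U 2 1) * (U 1 0/Δ) = 0 := by
    field_simp
    ring
  have s4 : (2/Δ) * (Δ/2) = 1 := by field_simp
  have s5 : (1/U 2 1) * (U 2 1) = 1 := by field_simp
  have s6 : (U 1 0/Δ) * (Δ/2) + (1/U 2 1) * (-(U 1 0 * U 2 1)/2) = 0 := by
    field_simp
    ring
  -- compositions
  have hfb : Φ.comp Ψ = AlgHom.id F (NTAlg (B32 : Matrix (Fin 3) (Fin 3) F)) := by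
    apply Ideal.Quotient.algHom_ext
    apply MvPolynomial.algHom_ext
    intro i
    have : ∀ q, (Φ.comp Ψ).comp (Ideal.Quotient.mkₐ F (ntIdeal (B32 : Matrix (Fin 3) (Fin 3) F)))
        q = Φ (Ψ (Ideal.Quotient.mk _ q)) := fun q => rfl
    fin_cases i <;>
      simp only [Fin.zero_eta, Fin.mk_one, Fin.reduceFinMk, Fin.isValue,
        AlgHom.comp_apply, Ideal.Quotient.mkₐ_eq_mk, AlgHom.id_comp,
        AlgHom.coe_comp, Function.comp_apply] <;>
      rw [show Ideal.Quotient.mk (ntIdeal (B32 : Matrix (Fin 3) (Fin 3) F)) (MvPolynomial.X _)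
          = ntGen (B32 : Matrix (Fin 3) (Fin 3) F) _ from rfl] <;>
      rw [hΨy]
    · rw [hvb0, map_mul, AlgHom.commutes, hΦx, hvf0, ← hαB]
      calc αB (Δ/2) * (αB (2/Δ) * ntGen B32 0)
          = αB ((Δ/2) * (2/Δ)) * ntGen B32 0 := by rw [map_mul]; ring
        _ = ntGen B32 0 := by rw [s1, map_one, one_mul]
    · rw [hvb1, map_add, map_mul, map_mul, AlgHom.commutes, AlgHom.commutes, hΦx, hΦx,
        hvf0, hvf1, ← hαB]
      calc αB (-(U 1 0 * U 2 1)/2) * (αB (2/Δ) * ntGen B32 0)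
            + αB (U 2 1) * (αB (U 1 0/Δ) * ntGen B32 0 + αB (1/U 2 1) * ntGen B32 1)
          = αB ((-(U 1 0 * U 2 1)/2) * (2/Δ) + (U 2 1) * (U 1 0/Δ)) * ntGen B32 0
            + αB ((U 2 1) * (1/U 2 1)) * ntGen B32 1 := by
            rw [map_add, map_mul, map_mul, map_mul]; ring
        _ = ntGen B32 1 := by rw [s3, s2, map_zero, map_one, zero_mul, one_mul, zero_add]
    · rw [hvb2, hΦx, hvf2]
  have hbf : Ψ.comp Φ = AlgHom.id F (NTAlg U) := by
    apply Ideal.Quotient.algHom_ext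
    apply MvPolynomial.algHom_ext
    intro i
    fin_cases i <;>
      simp only [Fin.zero_eta, Fin.mk_one, Fin.reduceFinMk, Fin.isValue,
        AlgHom.comp_apply, Ideal.Quotient.mkₐ_eq_mk, AlgHom.id_comp,
        AlgHom.coe_comp, Function.comp_apply] <;>
      rw [show Ideal.Quotient.mk (ntIdeal U) (MvPolynomial.X _) = ntGen U _ from rfl] <;>
      rw [hΦx]
    · rw [hvf0, map_mul, AlgHom.commutes, hΨy, hvb0, ← hαU]
      calc αU (2/Δ) * (αU (Δ/2) * ntGen U 0)
          = αU ((2/Δ) * (Δ/2)) * ntGen U 0 := by rw [map_mul]; ring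
        _ = ntGen U 0 := by rw [s4, map_one, one_mul]
    · rw [hvf1, map_add, map_mul, map_mul, AlgHom.commutes, AlgHom.commutes, hΨy, hΨy,
        hvb0, hvb1, ← hαU]
      calc αU (U 1 0/Δ) * (αU (Δ/2) * ntGen U 0)
            + αU (1/U 2 1) * (αU (-(U 1 0 * U 2 1)/2) * ntGen U 0 + αU (U 2 1) * ntGen U 1)
          = αU ((U 1 0/Δ) * (Δ/2) + (1/U 2 1) * (-(U 1 0 * U 2 1)/2)) * ntGen U 0
            + αU ((1/U 2 1) * (U 2 1)) * ntGen U 1 := by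
            rw [map_add, map_mul, map_mul, map_mul]; ring
        _ = ntGen U 1 := by rw [s6, s5, map_zero, map_one, zero_mul, one_mul, zero_add]
    · rw [hvf2, hΨy, hvb2]
  refine ⟨AlgEquiv.ofAlgHom Φ Ψ hfb hbf, ?_⟩
  intro j
  have : (AlgEquiv.ofAlgHom Φ Ψ hfb hbf) (ntGen U j) = Φ (ntGen U j) := rfl
  rw [this, hΦx]
  fin_cases j <;>
    simp [Fin.sum_univ_three, hvf0, hvf1, hvf2, Matrix.vecHead, Matrix.vecTail,
      ← hΔdef, ← hαB] <;>
    simp only [aux_smul, ← hαB]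
end
end
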